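/- arXiv:1504.05938 — 7 statements merged into one kernel-verified Lean document; each statement's English description precedes it below -/
import Mathlib

section
/- If X is a nonnegative random variable with 0 < E[X] < ∞ and X^s has the X-size biased distribution, then the Kolmogorov distance between X and X^s equals E|X - E[X]| / (2 E[X]). -/
open MeasureTheory ProbabilityTheory Real Set

/-- Lemma 1.1(a), Kolmogorov part: for a nonnegative random variable `X` with
`0 < E[X] < ∞` and `Xs` having the `X`-size biased distribution,
`d_K(X, Xs) = E|X - E[X]| / (2 E[X])`. -/
theorem kolmogorov_dist_size_bias
    {Ω : Type*} [MeasureSpace Ω] [IsProbabilityMeasure (volume : Measure Ω)]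
    (X Xs : Ω → ℝ) (hX : Measurable X) (hXs : Measurable Xs)
    (hXnn : ∀ ω, 0 ≤ X ω) (hXint : Integrable X)
    (hXpos : 0 < ∫ ω, X ω)
    (hsb : ∀ h : ℝ → ℝ, Measurable h → (∃ C, ∀ x, |h x| ≤ C) →
      ∫ ω, X ω * h (X ω) = (∫ ω, X ω) * ∫ ω, h (Xs ω)) :
    (⨆ z : ℝ, |(volume {ω | X ω ≤ z}).toReal - (volume {ω | Xs ω ≤ z}).toReal|)
      = (∫ ω, |X ω - ∫ ω', X ω'|) / (2 * ∫ ω, X ω) := by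
  set μr := ∫ ω, X ω with hμr
  have hs : ∀ z : ℝ, MeasurableSet {ω | X ω ≤ z} := fun z => hX measurableSet_Iic
  have hs' : ∀ z : ℝ, MeasurableSet {ω | Xs ω ≤ z} := fun z => hXs measurableSet_Iic
  have hg : Integrable (fun ω => μr - X ω) := (integrable_const μr).sub hXint
  have habs : Integrable (fun ω => |X ω - μr|) := (hXint.sub (integrable_const μr)).abs
  have hgint : ∫ ω, (μr - X ω) = 0 := by
    rw [integral_sub (integrable_const μr) hXint, integral_const]
    simp [hμr]
  set f : ℝ → ℝ := fun z => ∫ ω in {ω | X ω ≤ z}, (μr - X ω) with hf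
  -- cdf of Xs
  have hcdf : ∀ z : ℝ, μr * (volume {ω | Xs ω ≤ z}).toReal = ∫ ω in {ω | X ω ≤ z}, X ω := by
    intro z
    have hb := hsb (Set.indicator (Iic z) (fun _ => 1))
      (measurable_const.indicator measurableSet_Iic)
      ⟨1, by intro x; by_cases hx : x ∈ Iic z <;> simp [Set.indicator_apply, hx]⟩
    have h1 : ∫ ω, X ω * Set.indicator (Iic z) (fun _ => (1:ℝ)) (X ω)
        = ∫ ω in {ω | X ω ≤ z}, X ω := by
      rw [← integral_indicator (hs z)]
      refine integral_congr_ae (Filter.Eventually.of_forall fun ω => ?_)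
      by_cases hω : X ω ≤ z <;>
        simp [Set.indicator_apply, hω, Set.mem_Iic, Set.mem_setOf_eq]
    have h2 : ∫ ω, Set.indicator (Iic z) (fun _ => (1:ℝ)) (Xs ω)
        = (volume {ω | Xs ω ≤ z}).toReal := by
      show _ = (volume : Measure Ω).real {ω | Xs ω ≤ z}
      rw [← integral_indicator_one (hs' z)]
      refine integral_congr_ae (Filter.Eventually.of_forall fun ω => ?_)
      by_cases hω : Xs ω ≤ z <;>
        simp [Set.indicator_apply, hω, Set.mem_Iic, Set.mem_setOf_eq]
    rw [h1, h2] at hb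
    exact hb.symm
  have hdiff : ∀ z : ℝ,
      (volume {ω | X ω ≤ z}).toReal - (volume {ω | Xs ω ≤ z}).toReal = f z / μr := by
    intro z
    have hμne : μr ≠ 0 := ne_of_gt hXpos
    rw [eq_div_iff hμne]
    simp only [hf]
    rw [integral_sub (integrable_const μr).integrableOn hXint.integrableOn,
      setIntegral_const, ← hcdf z, smul_eq_mul]
    simp only [Measure.real]
    ring
  -- f is nonnegative
  have hfnn : ∀ z : ℝ, 0 ≤ f z := by
    intro z
    by_cases hz : z ≤ μr
    · exact setIntegral_nonneg (hs z) fun ω hω => by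
        simp only [Set.mem_setOf_eq] at hω; linarith
    · push_neg at hz
      have hcompl := integral_add_compl (hs z) hg
      rw [hgint] at hcompl
      have : f z = -∫ ω in {ω | X ω ≤ z}ᶜ, (μr - X ω) := by
        rw [hf]; linarith
      rw [this, neg_nonneg]
      exact setIntegral_nonpos (hs z).compl fun ω hω => by
        simp only [Set.mem_compl_iff, Set.mem_setOf_eq, not_le] at hω; linarith
  -- f z ≤ f μr
  have hfmax : ∀ z : ℝ, f z ≤ f μr := by
    intro z
    have hiz : f z = ∫ ω, Set.indicator {ω | X ω ≤ z} (fun ω => μr - X ω) ω :=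
      (integral_indicator (hs z)).symm
    have hiμ : f μr = ∫ ω, Set.indicator {ω | X ω ≤ μr} (fun ω => μr - X ω) ω :=
      (integral_indicator (hs μr)).symm
    have hint1 : Integrable (Set.indicator {ω | X ω ≤ z} (fun ω => μr - X ω)) :=
      hg.indicator (hs z)
    have hint2 : Integrable (Set.indicator {ω | X ω ≤ μr} (fun ω => μr - X ω)) :=
      hg.indicator (hs μr)
    have hsub : 0 ≤ ∫ ω, (Set.indicator {ω | X ω ≤ μr} (fun ω => μr - X ω) ω
        - Set.indicator {ω | X ω ≤ z} (fun ω => μr - X ω) ω) := by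
      refine integral_nonneg fun ω => ?_
      by_cases h1 : X ω ≤ z <;> by_cases h2 : X ω ≤ μr <;>
        simp [Set.indicator_apply, h1, h2, Set.mem_setOf_eq] <;> linarith
    rw [integral_sub hint2 hint1] at hsub
    rw [hiz, hiμ]; linarith
  -- value at μr
  have hfμ : f μr = (∫ ω, |X ω - μr|) / 2 := by
    have h1 : f μr = ∫ ω, ((μr - X ω) + |X ω - μr|) / 2 := by
      simp only [hf]
      rw [← integral_indicator (hs μr)]
      refine integral_congr_ae (Filter.Eventually.of_forall fun ω => ?_)
      by_cases hω : X ω ≤ μr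
      · have : |X ω - μr| = μr - X ω := by rw [abs_of_nonpos (by linarith)]; ring
        simp [Set.indicator_apply, hω, Set.mem_setOf_eq, this]
      · have : |X ω - μr| = X ω - μr := abs_of_nonneg (by push_neg at hω; linarith)
        simp [Set.indicator_apply, hω, Set.mem_setOf_eq, this]
    rw [h1, integral_div, integral_add hg habs, hgint, zero_add]
  -- conclude
  have hkey : ∀ z : ℝ,
      |(volume {ω | X ω ≤ z}).toReal - (volume {ω | Xs ω ≤ z}).toReal| = f z / μr := by
    intro z
    rw [hdiff z, abs_of_nonneg (div_nonneg (hfnn z) hXpos.le)]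
  simp only [hkey]
  have hval : f μr / μr = (∫ ω, |X ω - μr|) / (2 * μr) := by
    rw [hfμ, div_div]
  refine le_antisymm (ciSup_le fun z => ?_) ?_
  · rw [← hval]
    exact div_le_div_of_nonneg_right (hfmax z) hXpos.le -- maybe wrong name
  · rw [← hval]
    exact le_ciSup ⟨f μr / μr, by
      rintro x ⟨z, rfl⟩
      exact div_le_div_of_nonneg_right (hfmax z) hXpos.le⟩ μr
end

section
/- If X is a nonnegative random variable with 0 < E[X] < ∞ and X^s has the X-size biased distribution, then the total variation distance between X and X^s equals E|X - E[X]| / (2 E[X]). -/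
open MeasureTheory ProbabilityTheory Real Set

/-- Lemma 1.1(a), total variation part: for a nonnegative random variable `X` with
`0 < E[X] < ∞` and `Xs` having the `X`-size biased distribution,
`d_TV(X, Xs) = E|X - E[X]| / (2 E[X])`. -/
theorem tv_dist_size_bias
    {Ω : Type*} [MeasureSpace Ω] [IsProbabilityMeasure (volume : Measure Ω)]
    (X Xs : Ω → ℝ) (hX : Measurable X) (hXs : Measurable Xs)
    (hXnn : ∀ ω, 0 ≤ X ω) (hXint : Integrable X)
    (hXpos : 0 < ∫ ω, X ω)
    (hsb : ∀ h : ℝ → ℝ, Measurable h → (∃ C, ∀ x, |h x| ≤ C) →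
      ∫ ω, X ω * h (X ω) = (∫ ω, X ω) * ∫ ω, h (Xs ω)) :
    (⨆ B : {B : Set ℝ // MeasurableSet B},
        |(volume (X ⁻¹' B.1)).toReal - (volume (Xs ⁻¹' B.1)).toReal|)
      = (∫ ω, |X ω - ∫ ω', X ω'|) / (2 * ∫ ω, X ω) := by
  set m := ∫ ω, X ω with hmdef
  have hm0 : m ≠ 0 := ne_of_gt hXpos
  -- half lemma
  have hintm : Integrable (fun ω => m - X ω) := (integrable_const m).sub hXint
  have hpos : Integrable (fun ω => max (m - X ω) 0) := hintm.pos_part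
  have hneg : Integrable (fun ω => max (X ω - m) 0) := by
    have := hintm.neg_part
    simpa [neg_sub] using this
  have habs : Integrable (fun ω => |X ω - m|) := hXint.sub (integrable_const m) |>.abs
  have hhalf : ∫ ω, max (m - X ω) 0 = (∫ ω, |X ω - m|) / 2 := by
    have hsub : (∫ ω, max (m - X ω) 0) - ∫ ω, max (X ω - m) 0 = 0 := by
      rw [← integral_sub hpos hneg]
      have : ∀ ω, max (m - X ω) 0 - max (X ω - m) 0 = m - X ω := by
        intro ω
        have := max_zero_sub_max_neg_zero_eq_self (m - X ω)
        simpa [neg_sub] using this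
      rw [integral_congr_ae (Filter.Eventually.of_forall this), integral_sub (integrable_const m) hXint]
      simp [← hmdef]
    have hadd : (∫ ω, max (m - X ω) 0) + ∫ ω, max (X ω - m) 0 = ∫ ω, |X ω - m| := by
      rw [← integral_add hpos hneg]
      apply integral_congr_ae (Filter.Eventually.of_forall _)
      intro ω
      have := max_zero_add_max_neg_zero_eq_abs_self (m - X ω)
      simpa [neg_sub, abs_sub_comm] using this
    linarith
  -- key identity
  have key : ∀ B : Set ℝ, MeasurableSet B →
      (volume (X ⁻¹' B)).toReal - (volume (Xs ⁻¹' B)).toReal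
        = (∫ ω, Set.indicator (X ⁻¹' B) (fun _ => (1:ℝ)) ω * (m - X ω)) / m := by
    intro B hB
    have hfun : (fun ω => Set.indicator B (fun _ => (1:ℝ)) (X ω))
        = Set.indicator (X ⁻¹' B) (fun _ => (1:ℝ)) := by
      funext ω; by_cases h : X ω ∈ B <;> simp [Set.indicator_apply, h]
    have hI : Integrable (Set.indicator (X ⁻¹' B) (fun _ => (1:ℝ))) :=
      (integrable_const (1:ℝ)).indicator (hX hB)
    have hIX : Integrable (fun ω => Set.indicator (X ⁻¹' B) (fun _ => (1:ℝ)) ω * X ω) :=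
      hXint.bdd_mul hI.aestronglyMeasurable (c := 1) (Filter.Eventually.of_forall fun ω => by
        by_cases h : ω ∈ X ⁻¹' B <;> simp [Set.indicator_apply, h])
    have hPX : (volume (X ⁻¹' B)).toReal = ∫ ω, Set.indicator (X ⁻¹' B) (fun _ => (1:ℝ)) ω := by
      rw [← measureReal_def, ← integral_indicator_one (hX hB)]; rfl
    have hbd : ∃ C, ∀ x, |Set.indicator B (fun _ => (1:ℝ)) x| ≤ C :=
      ⟨1, fun x => by by_cases h : x ∈ B <;> simp [Set.indicator_apply, h]⟩
    have hsbB := hsb (Set.indicator B (fun _ => (1:ℝ))) (measurable_const.indicator hB) hbd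
    have hPXs : (volume (Xs ⁻¹' B)).toReal
        = (∫ ω, X ω * Set.indicator B (fun _ => (1:ℝ)) (X ω)) / m := by
      rw [hsbB, mul_div_cancel_left₀ _ hm0]
      refine (integral_indicator_one (hXs hB)).symm.trans ?_
      exact integral_congr_ae (Filter.Eventually.of_forall fun ω => by
        by_cases h : Xs ω ∈ B <;> simp [Set.indicator_apply, Set.mem_preimage, h])
    have hint2 : ∫ ω, Set.indicator (X ⁻¹' B) (fun _ => (1:ℝ)) ω * (m - X ω)
        = m * (∫ ω, Set.indicator (X ⁻¹' B) (fun _ => (1:ℝ)) ω)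
          - ∫ ω, Set.indicator (X ⁻¹' B) (fun _ => (1:ℝ)) ω * X ω := by
      rw [← integral_const_mul, ← integral_sub (hI.const_mul m) hIX]
      exact integral_congr_ae (Filter.Eventually.of_forall fun ω => by ring)
    rw [hPX, hPXs, hint2]
    have : (∫ ω, X ω * Set.indicator B (fun _ => (1:ℝ)) (X ω))
        = ∫ ω, Set.indicator (X ⁻¹' B) (fun _ => (1:ℝ)) ω * X ω := by
      exact integral_congr_ae (Filter.Eventually.of_forall fun ω => by
        by_cases h : X ω ∈ B <;> simp [Set.indicator_apply, Set.mem_preimage, h, mul_comm])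
    rw [this]
    field_simp
  -- bound
  set V := (∫ ω, |X ω - m|) / (2 * m) with hVdef
  have hub : ∀ B : {B : Set ℝ // MeasurableSet B},
      |(volume (X ⁻¹' B.1)).toReal - (volume (Xs ⁻¹' B.1)).toReal| ≤ V := by
    rintro ⟨B, hB⟩
    rw [key B hB, abs_div, abs_of_pos hXpos]
    have hIint : Integrable (fun ω => Set.indicator (X ⁻¹' B) (fun _ => (1:ℝ)) ω * (m - X ω)) :=
      hintm.bdd_mul ((integrable_const (1:ℝ)).indicator (hX hB)).aestronglyMeasurable
        (c := 1) (Filter.Eventually.of_forall fun ω => by by_cases h : ω ∈ X ⁻¹' B <;> simp [Set.indicator_apply, h])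
    have hle1 : ∫ ω, Set.indicator (X ⁻¹' B) (fun _ => (1:ℝ)) ω * (m - X ω)
        ≤ ∫ ω, max (m - X ω) 0 := by
      apply integral_mono hIint hpos
      intro ω
      by_cases h : ω ∈ X ⁻¹' B <;> simp [Set.indicator_apply, h, le_max_right, le_max_left]
    have hle2 : -(∫ ω, max (X ω - m) 0)
        ≤ ∫ ω, Set.indicator (X ⁻¹' B) (fun _ => (1:ℝ)) ω * (m - X ω) := by
      rw [← integral_neg]
      apply integral_mono hneg.neg hIint
      intro ω
      by_cases h : ω ∈ X ⁻¹' B <;>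
        simp [Set.indicator_apply, h, neg_le, le_max_right, le_max_left]
    have hneg_half : ∫ ω, max (X ω - m) 0 = (∫ ω, |X ω - m|) / 2 := by
      have hsub : (∫ ω, max (m - X ω) 0) - ∫ ω, max (X ω - m) 0 = 0 := by
        rw [← integral_sub hpos hneg]
        have : ∀ ω, max (m - X ω) 0 - max (X ω - m) 0 = m - X ω := by
          intro ω
          have := max_zero_sub_max_neg_zero_eq_self (m - X ω)
          simpa [neg_sub] using this
        rw [integral_congr_ae (Filter.Eventually.of_forall this),
          integral_sub (integrable_const m) hXint]
        simp [← hmdef]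
      linarith
    have habs_le : |∫ ω, Set.indicator (X ⁻¹' B) (fun _ => (1:ℝ)) ω * (m - X ω)|
        ≤ (∫ ω, |X ω - m|) / 2 := by
      rw [abs_le]
      constructor
      · calc -((∫ ω, |X ω - m|) / 2) = -(∫ ω, max (X ω - m) 0) := by rw [hneg_half]
          _ ≤ _ := hle2
      · calc _ ≤ ∫ ω, max (m - X ω) 0 := hle1
          _ = (∫ ω, |X ω - m|) / 2 := hhalf
    rw [hVdef]
    rw [div_le_div_iff₀ hXpos (by linarith)] at *
    calc |∫ ω, Set.indicator (X ⁻¹' B) (fun _ => (1:ℝ)) ω * (m - X ω)| * (2 * m)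
        ≤ ((∫ ω, |X ω - m|) / 2) * (2 * m) := by
          apply mul_le_mul_of_nonneg_right habs_le (by linarith)
      _ = (∫ ω, |X ω - m|) * m := by ring
  -- achiever
  have hach : |(volume (X ⁻¹' (Set.Iic m))).toReal - (volume (Xs ⁻¹' (Set.Iic m))).toReal| = V := by
    rw [key _ measurableSet_Iic]
    have : (∫ ω, Set.indicator (X ⁻¹' Set.Iic m) (fun _ => (1:ℝ)) ω * (m - X ω))
        = ∫ ω, max (m - X ω) 0 := by
      congr 1; funext ω
      by_cases h : X ω ≤ m
      · simp [Set.indicator_apply, Set.mem_preimage, h, max_eq_left (by linarith : (0:ℝ) ≤ m - X ω)]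
      · push_neg at h
        simp [Set.indicator_apply, Set.mem_preimage, not_le.mpr h,
          max_eq_right (by linarith : m - X ω ≤ (0:ℝ))]
    rw [this, hhalf]
    have hV0 : 0 ≤ (∫ ω, |X ω - m|) / 2 / m :=
      div_nonneg (div_nonneg (integral_nonneg fun ω => abs_nonneg _) (by norm_num)) hXpos.le
    rw [abs_of_nonneg hV0, hVdef]
    field_simp
  haveI : Nonempty {B : Set ℝ // MeasurableSet B} := ⟨⟨∅, MeasurableSet.empty⟩⟩
  apply le_antisymm
  · exact ciSup_le hub
  · have hbdd : BddAbove (Set.range fun B : {B : Set ℝ // MeasurableSet B} =>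
        |(volume (X ⁻¹' B.1)).toReal - (volume (Xs ⁻¹' B.1)).toReal|) := by
      refine ⟨V, ?_⟩
      rintro _ ⟨B, rfl⟩
      exact hub B
    have := le_ciSup hbdd (⟨Set.Iic m, measurableSet_Iic⟩ : {B : Set ℝ // MeasurableSet B})
    rw [hach] at this
    exact this
end

section
/- If X is a nonnegative random variable with 0 < E[X] < ∞ and E[X²] < ∞, and X^s has the X-size biased distribution, then the Wasserstein distance between X and X^s equals Var(X) / E[X]. -/
open MeasureTheory ProbabilityTheory Real Set
open scoped NNReal ENNReal

/-- Lemma 1.1(b): for a nonnegative random variable `X` with `0 < E[X] < ∞` and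
`E[X²] < ∞`, and `Xs` having the `X`-size biased distribution,
`d_W(X, Xs) = Var(X) / E[X]`. -/
theorem wasserstein_dist_size_bias
    {Ω : Type*} [MeasureSpace Ω] [IsProbabilityMeasure (volume : Measure Ω)]
    (X Xs : Ω → ℝ) (hX : Measurable X) (hXs : Measurable Xs)
    (hXnn : ∀ ω, 0 ≤ X ω) (hXint : Integrable X)
    (hX2 : Integrable (fun ω => X ω ^ 2))
    (hXpos : 0 < ∫ ω, X ω)
    (hsb : ∀ h : ℝ → ℝ, Measurable h → (∃ C, ∀ x, |h x| ≤ C) →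
      ∫ ω, X ω * h (X ω) = (∫ ω, X ω) * ∫ ω, h (Xs ω)) :
    (⨆ f : {f : ℝ → ℝ // LipschitzWith 1 f},
        |(∫ ω, f.1 (X ω)) - ∫ ω, f.1 (Xs ω)|)
      = (∫ ω, (X ω - ∫ ω', X ω') ^ 2) / ∫ ω, X ω := by
  set m : ℝ := ∫ ω, X ω with hm
  set μ : Measure ℝ := Measure.map X volume with hμ
  set ν : Measure ℝ := Measure.map Xs volume with hν
  have hνprob : IsProbabilityMeasure ν := Measure.isProbabilityMeasure_map hXs.aemeasurable
  have hμprob : IsProbabilityMeasure μ := Measure.isProbabilityMeasure_map hX.aemeasurable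
  have hμae : ∀ᵐ x ∂μ, 0 ≤ x := by
    rw [hμ, ae_map_iff hX.aemeasurable (measurableSet_Ici : MeasurableSet (Ici (0:ℝ)))]
    exact ae_of_all _ hXnn
  have hid : Integrable (fun x => x) μ :=
    (integrable_map_measure measurable_id'.aestronglyMeasurable hX.aemeasurable).2 hXint
  have hid2 : Integrable (fun x => x ^ 2) μ :=
    (integrable_map_measure (measurable_id'.pow_const 2).aestronglyMeasurable
      hX.aemeasurable).2 hX2
  -- key: ν has density x/m with respect to μ
  have key : ν = μ.withDensity (fun x => ENNReal.ofReal (x / m)) := by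
    ext s hs
    have hb := hsb (s.indicator 1) (measurable_one.indicator hs)
      ⟨1, fun x => by
        by_cases hx : x ∈ s <;> simp [Set.indicator_apply, hx]⟩
    have hL : ∫ ω, X ω * s.indicator 1 (X ω) = ∫ x in s, x ∂μ := by
      have h1 : ∀ ω, X ω * s.indicator 1 (X ω) = s.indicator (fun x => x) (X ω) := by
        intro ω
        by_cases hx : X ω ∈ s <;> simp [Set.indicator_apply, hx]
      rw [integral_congr_ae (ae_of_all _ h1), hμ,
        ← integral_map hX.aemeasurable (measurable_id'.indicator hs).aestronglyMeasurable,
        integral_indicator hs]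
    have hR : ∫ ω, s.indicator (1 : ℝ → ℝ) (Xs ω) = (ν s).toReal := by
      rw [hν, ← integral_map hXs.aemeasurable
        ((measurable_one (α := ℝ) (β := ℝ)).indicator hs).aestronglyMeasurable,
        integral_indicator_one hs]
      rfl
    rw [hL, hR] at hb
    rw [withDensity_apply _ hs]
    have hint : Integrable (fun x => x / m) (μ.restrict s) := (hid.div_const m).restrict
    rw [← ofReal_integral_eq_lintegral_ofReal hint
      (ae_restrict_of_ae (hμae.mono fun x hx => div_nonneg hx hXpos.le))]
    rw [integral_div, hb, mul_div_cancel_left₀ _ hXpos.ne',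
      ENNReal.ofReal_toReal (measure_ne_top ν s)]
  -- transfer lemma
  have transfer : ∀ f : ℝ → ℝ, Measurable f → Integrable (fun x => x * f x) μ →
      Integrable (fun ω => f (Xs ω)) ∧
      ∫ ω, f (Xs ω) = (∫ ω, X ω * f (X ω)) / m := by
    intro f hf hxf
    have hXf : ∫ ω, X ω * f (X ω) = ∫ x, x * f x ∂μ := by
      rw [hμ, ← integral_map hX.aemeasurable (f := fun x : ℝ => x * f x) (measurable_id'.mul hf).aestronglyMeasurable]
    have hdens : (fun x : ℝ => ENNReal.ofReal (x / m)) =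
        fun x => ((Real.toNNReal (x / m) : ℝ≥0) : ℝ≥0∞) := rfl
    have hdmeas : AEMeasurable (fun x : ℝ => Real.toNNReal (x / m)) μ :=
      ((measurable_id'.div_const m).real_toNNReal).aemeasurable
    have hsmul_ae : (fun x => Real.toNNReal (x / m) • f x)
        =ᵐ[μ] fun x => (x * f x) / m := by
      refine hμae.mono fun x hx => ?_
      show Real.toNNReal (x / m) • f x = x * f x / m
      rw [NNReal.smul_def, smul_eq_mul, Real.coe_toNNReal _ (div_nonneg hx hXpos.le)]
      ring
    have hν_int : Integrable f ν := by
      rw [key, hdens]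
      exact (integrable_withDensity_iff_integrable_smul₀ hdmeas).2
        ((hxf.div_const m).congr hsmul_ae.symm)
    constructor
    · have := (integrable_map_measure hf.aestronglyMeasurable hXs.aemeasurable).1
        (by rwa [← hν])
      simpa [Function.comp_def] using this
    · rw [show ∫ ω, f (Xs ω) = ∫ x, f x ∂ν from
        (integral_map hXs.aemeasurable hf.aestronglyMeasurable).symm, key, hdens,
        integral_withDensity_eq_integral_smul₀ hdmeas f,
        integral_congr_ae hsmul_ae, integral_div, hXf]
  -- notation for the variance integral
  set V : ℝ := ∫ ω, (X ω - m) ^ 2 with hV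
  have hVnn : 0 ≤ V := integral_nonneg fun ω => sq_nonneg _
  -- the upper bound for every 1-Lipschitz f
  have hbd : ∀ f : {f : ℝ → ℝ // LipschitzWith 1 f},
      |(∫ ω, f.1 (X ω)) - ∫ ω, f.1 (Xs ω)| ≤ V / m := by
    intro f
    obtain ⟨f, hf⟩ := f
    have hfm : Measurable f := hf.continuous.measurable
    have hlip : ∀ x y : ℝ, |f x - f y| ≤ |x - y| := fun x y => by
      have := hf.dist_le_mul x y
      simpa [Real.dist_eq] using this
    -- integrability of x * f x wrt μ
    have hxf : Integrable (fun x => x * f x) μ := by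
      refine ((hid.abs.const_mul |f 0|).add hid2).mono'
        (measurable_id'.mul hfm).aestronglyMeasurable (ae_of_all _ fun x => ?_)
      have h1 : |f x| ≤ |f 0| + |x| := by
        have := hlip x 0
        have h2 : |f x| - |f 0| ≤ |f x - f 0| := abs_sub_abs_le_abs_sub _ _
        simp only [sub_zero] at this
        linarith
      have : ‖x * f x‖ = |x| * |f x| := abs_mul x (f x)
      rw [Real.norm_eq_abs, abs_mul]
      calc |x| * |f x| ≤ |x| * (|f 0| + |x|) :=
            mul_le_mul_of_nonneg_left h1 (abs_nonneg x)
        _ = |f 0| * |x| + |x| ^ 2 := by ring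
        _ = |f 0| * |x| + x ^ 2 := by rw [sq_abs]
    obtain ⟨hfXs, hEq⟩ := transfer f hfm hxf
    -- integrability of f (X ·) and X · * f (X ·)
    have hfX : Integrable (fun ω => f (X ω)) := by
      have hbint : Integrable (fun ω => |f m| + |X ω - m|) :=
        (integrable_const _).add (hXint.sub (integrable_const m)).abs
      refine hbint.mono' ((hfm.comp hX).aestronglyMeasurable) (ae_of_all _ fun ω => ?_)
      have h1 : |f (X ω)| - |f m| ≤ |f (X ω) - f m| := abs_sub_abs_le_abs_sub _ _
      have h2 := hlip (X ω) m
      rw [Real.norm_eq_abs]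
      linarith
    have hXfΩ : Integrable (fun ω => X ω * f (X ω)) := by
      have := (integrable_map_measure (measurable_id'.mul hfm).aestronglyMeasurable
        hX.aemeasurable).1 (by rwa [← hμ])
      simpa [Function.comp_def] using this
    -- the covariance identity
    have hcov : ∫ ω, (X ω - m) * (f (X ω) - f m)
        = (∫ ω, X ω * f (X ω)) - m * ∫ ω, f (X ω) := by
      have h1 : ∀ ω, (X ω - m) * (f (X ω) - f m)
          = (X ω * f (X ω) - f m * X ω) - (m * f (X ω) - m * f m) := fun ω => by ring
      have i1 : Integrable (fun ω => f m * X ω) := hXint.const_mul (f m)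
      have i2 : Integrable (fun ω => m * f (X ω)) := hfX.const_mul m
      have i3 : Integrable (fun ω => X ω * f (X ω) - f m * X ω) := hXfΩ.sub i1
      have i4 : Integrable (fun ω => m * f (X ω) - m * f m) := i2.sub (integrable_const _)
      rw [integral_congr_ae (ae_of_all _ h1), integral_sub i3 i4, integral_sub hXfΩ i1,
        integral_sub i2 (integrable_const _), integral_const_mul, integral_const_mul,
        integral_const]
      simp only [measure_univ, ENNReal.toReal_one, probReal_univ, smul_eq_mul, one_mul]
      rw [← hm]
      ring
    have hg_int : Integrable (fun ω => (X ω - m) * (f (X ω) - f m)) := by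
      have h1 : ∀ ω, (X ω - m) * (f (X ω) - f m)
          = (X ω * f (X ω) - f m * X ω) - (m * f (X ω) - m * f m) := fun ω => by ring
      exact ((hXfΩ.sub (hXint.const_mul (f m))).sub
        ((hfX.const_mul m).sub (integrable_const _))).congr
        (ae_of_all _ fun ω => (h1 ω).symm)
    have hdiff : (∫ ω, f (Xs ω)) - ∫ ω, f (X ω)
        = (∫ ω, (X ω - m) * (f (X ω) - f m)) / m := by
      rw [hEq, hcov, sub_div, mul_div_cancel_left₀ _ hXpos.ne']
    have hVint : Integrable (fun ω => (X ω - m) ^ 2) :=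
      ((hX2.sub (hXint.const_mul (2 * m))).add (integrable_const (m ^ 2))).congr
        (ae_of_all _ fun ω => by simp only [Pi.add_apply, Pi.sub_apply]; ring)
    have habs : |∫ ω, (X ω - m) * (f (X ω) - f m)| ≤ V := by
      calc |∫ ω, (X ω - m) * (f (X ω) - f m)|
          ≤ ∫ ω, |(X ω - m) * (f (X ω) - f m)| := by
            have := norm_integral_le_integral_norm (μ := (volume : Measure Ω))
              (fun ω => (X ω - m) * (f (X ω) - f m))
            simpa only [Real.norm_eq_abs] using this
        _ ≤ ∫ ω, (X ω - m) ^ 2 := by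
            refine integral_mono hg_int.abs hVint fun ω => ?_
            rw [abs_mul]
            calc |X ω - m| * |f (X ω) - f m| ≤ |X ω - m| * |X ω - m| :=
                mul_le_mul_of_nonneg_left (hlip _ _) (abs_nonneg _)
              _ = (X ω - m) ^ 2 := by rw [← sq_abs]; ring
        _ = V := hV.symm
    rw [abs_sub_comm, hdiff, abs_div, abs_of_pos hXpos]
    gcongr
  -- the identity f = id attains the bound
  have hidXs := transfer (fun x => x) measurable_id'
    (hid2.congr (ae_of_all _ fun x => by ring))
  have hXsint : ∫ ω, Xs ω = (∫ ω, X ω ^ 2) / m := by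
    rw [hidXs.2]; congr 1; exact integral_congr_ae (ae_of_all _ fun ω => by ring)
  have hVeq : V = (∫ ω, X ω ^ 2) - m ^ 2 := by
    rw [hV]
    have h1 : ∀ ω, (X ω - m) ^ 2 = X ω ^ 2 - (2 * m) * X ω + m ^ 2 := fun ω => by ring
    have i5 : Integrable (fun ω => X ω ^ 2 - 2 * m * X ω) := hX2.sub (hXint.const_mul (2 * m))
    rw [integral_congr_ae (ae_of_all _ h1), integral_add i5 (integrable_const _),
      integral_sub hX2 (hXint.const_mul (2 * m)), integral_const_mul, integral_const]
    simp only [measure_univ, ENNReal.toReal_one, probReal_univ, smul_eq_mul, one_mul]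
    rw [← hm]
    ring
  have hattain : |m - ∫ ω, Xs ω| = V / m := by
    have hmsq : m ^ 2 ≤ ∫ ω, X ω ^ 2 := by
      have h0 := hVnn; rw [hVeq] at h0; linarith
    rw [abs_sub_comm, hXsint, hVeq]
    have h2 : (∫ ω, X ω ^ 2) / m - m = ((∫ ω, X ω ^ 2) - m ^ 2) / m := by
      field_simp
    rw [h2, abs_of_nonneg (div_nonneg (by linarith) hXpos.le)]
  have hne : Nonempty {f : ℝ → ℝ // LipschitzWith 1 f} :=
    ⟨⟨id, LipschitzWith.id⟩⟩
  refine le_antisymm (ciSup_le hbd) ?_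
  have hbdd : BddAbove (Set.range fun f : {f : ℝ → ℝ // LipschitzWith 1 f} =>
      |(∫ ω, f.1 (X ω)) - ∫ ω, f.1 (Xs ω)|) := ⟨V / m, by rintro _ ⟨f, rfl⟩; exact hbd f⟩
  refine le_ciSup_of_le hbdd ⟨fun x => x, by exact (LipschitzWith.id : LipschitzWith 1 (id : ℝ → ℝ))⟩ ?_
  simpa using hattain.ge
end

section
/- For a nonnegative random variable X with 0 < E[X] < ∞ and X^s having the X-size biased distribution, the Kolmogorov distance between X and X^s equals E[(X - E[X]) 1_{X > E[X]}] / E[X], and the supremum in the Kolmogorov distance is attained at the point z = E[X]. -/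
open MeasureTheory ProbabilityTheory Real Set

/-- For a nonnegative random variable `X` with `0 < E[X] < ∞` and `Xs` having the
`X`-size biased distribution, the Kolmogorov distance between `X` and `Xs` equals
`E[(X - E[X]) 1_{X > E[X]}] / E[X]`, and the supremum in the Kolmogorov distance is
attained at the point `z = E[X]`. -/
theorem kolmogorov_dist_size_bias_attained
    {Ω : Type*} [MeasureSpace Ω] [IsProbabilityMeasure (volume : Measure Ω)]
    (X Xs : Ω → ℝ) (hX : Measurable X) (hXs : Measurable Xs)
    (hXnn : ∀ ω, 0 ≤ X ω) (hXint : Integrable X)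
    (hXpos : 0 < ∫ ω, X ω)
    (hsb : ∀ h : ℝ → ℝ, Measurable h → (∃ C, ∀ x, |h x| ≤ C) →
      ∫ ω, X ω * h (X ω) = (∫ ω, X ω) * ∫ ω, h (Xs ω)) :
    (⨆ z : ℝ, |(volume {ω | Xs ω ≤ z}).toReal - (volume {ω | X ω ≤ z}).toReal|)
      = (∫ ω, if (∫ ω', X ω') < X ω then X ω - ∫ ω', X ω' else 0) / ∫ ω, X ω
    ∧ |(volume {ω | Xs ω ≤ ∫ ω', X ω'}).toReal - (volume {ω | X ω ≤ ∫ ω', X ω'}).toReal|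
      = ⨆ z : ℝ, |(volume {ω | Xs ω ≤ z}).toReal - (volume {ω | X ω ≤ z}).toReal| := by
  set m : ℝ := ∫ ω, X ω with hm
  have hm0 : (0:ℝ) < m := hXpos
  set f : Ω → ℝ := fun ω => X ω - m with hf
  have hfint : Integrable f := hXint.sub (integrable_const m)
  have hfzero : ∫ ω, f ω = 0 := by
    rw [hf]
    rw [integral_sub hXint (integrable_const m)]
    simp [hm]
  have hle : ∀ z : ℝ, MeasurableSet {ω | X ω ≤ z} := fun z => hX measurableSet_Iic
  have hgt : ∀ z : ℝ, MeasurableSet {ω | z < X ω} := fun z => hX measurableSet_Ioi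
  set d : ℝ → ℝ := fun z => ∫ ω, ({ω | X ω ≤ z}).indicator f ω with hd
  have hdint : ∀ z, Integrable (({ω | X ω ≤ z}).indicator f) := fun z => hfint.indicator (hle z)
  have hdint' : ∀ z, Integrable (({ω | z < X ω}).indicator f) := fun z => hfint.indicator (hgt z)
  -- complement splitting
  have hsplit : ∀ z : ℝ, d z = - ∫ ω, ({ω | z < X ω}).indicator f ω := by
    intro z
    have h1 : (fun ω => ({ω | X ω ≤ z}).indicator f ω + ({ω | z < X ω}).indicator f ω) = f := by
      funext ω
      by_cases h : X ω ≤ z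
      · simp [Set.indicator_apply, h, not_lt.mpr h]
      · simp [Set.indicator_apply, h, lt_of_not_ge h]
    have h2 : d z + ∫ ω, ({ω | z < X ω}).indicator f ω = 0 := by
      rw [hd]
      rw [← integral_add (hdint z) (hdint' z)]
      rw [h1, hfzero]
    linarith
  -- key identity: difference of cdfs equals d z / m
  have key : ∀ z : ℝ,
      (volume {ω | Xs ω ≤ z}).toReal - (volume {ω | X ω ≤ z}).toReal = d z / m := by
    intro z
    have hmeas : Measurable ((Set.Iic z).indicator (fun _ => (1:ℝ))) :=
      measurable_const.indicator measurableSet_Iic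
    have hbdd : ∃ C, ∀ x, |(Set.Iic z).indicator (fun _ => (1:ℝ)) x| ≤ C := by
      refine ⟨1, fun x => ?_⟩
      by_cases h : x ∈ Set.Iic z <;> simp [Set.indicator_apply, h]
    have h1 := hsb _ hmeas hbdd
    have h2 : ∫ ω, X ω * (Set.Iic z).indicator (fun _ => (1:ℝ)) (X ω)
        = ∫ ω, ({ω | X ω ≤ z}).indicator X ω := by
      apply integral_congr_ae
      filter_upwards with ω
      by_cases h : X ω ≤ z <;> simp [Set.indicator_apply, h, Set.mem_Iic]
    have h3 : ∫ ω, (Set.Iic z).indicator (fun _ => (1:ℝ)) (Xs ω)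
        = (volume {ω | Xs ω ≤ z}).toReal := by
      have : ∫ ω, (Set.Iic z).indicator (fun _ => (1:ℝ)) (Xs ω)
          = ∫ ω, ({ω | Xs ω ≤ z}).indicator (fun _ => (1:ℝ)) ω := by
        apply integral_congr_ae
        filter_upwards with ω
        by_cases h : Xs ω ≤ z <;> simp [Set.indicator_apply, h, Set.mem_Iic]
      have hms : MeasurableSet {ω | Xs ω ≤ z} := hXs measurableSet_Iic
      rw [this, integral_indicator_const (1:ℝ) hms]
      simp
      rfl
    have h4 : (volume {ω | Xs ω ≤ z}).toReal = (∫ ω, ({ω | X ω ≤ z}).indicator X ω) / m := by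
      rw [h2, h3] at h1
      field_simp at h1 ⊢
      linarith
    have h5 : (volume {ω | X ω ≤ z}).toReal
        = (∫ ω, ({ω | X ω ≤ z}).indicator (fun _ => m) ω) / m := by
      rw [integral_indicator_const m (hle z)]
      field_simp
      rfl
    have h6 : d z = (∫ ω, ({ω | X ω ≤ z}).indicator X ω)
        - ∫ ω, ({ω | X ω ≤ z}).indicator (fun _ => m) ω := by
      have e1 : d z = ∫ ω, (({ω | X ω ≤ z}).indicator X ω
          - ({ω | X ω ≤ z}).indicator (fun _ => m) ω) := by
        apply integral_congr_ae
        filter_upwards with ω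
        by_cases h : ω ∈ {ω | X ω ≤ z} <;> simp [Set.indicator_apply, h, hf]
      rw [e1]
      exact integral_sub (hXint.indicator (hle z)) ((integrable_const m).indicator (hle z))
    rw [h4, h5, div_sub_div_same, h6]
  -- d z ≤ 0
  have hdnp : ∀ z : ℝ, d z ≤ 0 := by
    intro z
    rcases le_or_gt z m with h | h
    · apply integral_nonpos
      intro ω
      by_cases hω : X ω ≤ z
      · have : ω ∈ {ω | X ω ≤ z} := hω
        simp only [Set.indicator_of_mem this, hf, Pi.zero_apply]
        linarith
      · have : ω ∉ {ω | X ω ≤ z} := hω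
        simp [Set.indicator_of_notMem this]
    · rw [hsplit z]
      simp only [neg_nonpos]
      apply integral_nonneg
      intro ω
      by_cases hω : z < X ω
      · have : ω ∈ {ω | z < X ω} := hω
        simp only [Set.indicator_of_mem this, hf, Pi.zero_apply]
        linarith
      · have : ω ∉ {ω | z < X ω} := hω
        simp [Set.indicator_of_notMem this]
  -- d m ≤ d z
  have hdmin : ∀ z : ℝ, d m ≤ d z := by
    intro z
    rcases le_or_gt z m with h | h
    · apply integral_mono (hdint m) (hdint z)
      intro ω
      by_cases h1 : X ω ≤ z
      · have hz : ω ∈ {ω | X ω ≤ z} := h1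
        have hmm : ω ∈ {ω | X ω ≤ m} := le_trans h1 h
        simp [Set.indicator_of_mem hz, Set.indicator_of_mem hmm]
      · by_cases h2 : X ω ≤ m
        · have hz : ω ∉ {ω | X ω ≤ z} := h1
          have hmm : ω ∈ {ω | X ω ≤ m} := h2
          simp only [Set.indicator_of_mem hmm, Set.indicator_of_notMem hz, hf]
          linarith
        · have hz : ω ∉ {ω | X ω ≤ z} := h1
          have hmm : ω ∉ {ω | X ω ≤ m} := h2
          simp [Set.indicator_of_notMem hz, Set.indicator_of_notMem hmm]
    · rw [hsplit z, hsplit m, neg_le_neg_iff]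
      apply integral_mono (hdint' z) (hdint' m)
      intro ω
      by_cases h1 : z < X ω
      · have hz : ω ∈ {ω | z < X ω} := h1
        have hmm : ω ∈ {ω | m < X ω} := lt_trans h h1
        simp [Set.indicator_of_mem hz, Set.indicator_of_mem hmm]
      · by_cases h2 : m < X ω
        · have hz : ω ∉ {ω | z < X ω} := h1
          have hmm : ω ∈ {ω | m < X ω} := h2
          simp only [Set.indicator_of_mem hmm, Set.indicator_of_notMem hz, hf]
          linarith
        · have hz : ω ∉ {ω | z < X ω} := h1
          have hmm : ω ∉ {ω | m < X ω} := h2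
          simp [Set.indicator_of_notMem hz, Set.indicator_of_notMem hmm]
  -- the numerator equals -(d m)
  have hnum : (∫ ω, if m < X ω then X ω - m else 0) = - d m := by
    rw [hsplit m]
    rw [neg_neg]
    apply integral_congr_ae
    filter_upwards with ω
    by_cases h : m < X ω <;> simp [Set.indicator_apply, h, hf]
  -- abs value form
  have habs : ∀ z : ℝ, |(volume {ω | Xs ω ≤ z}).toReal - (volume {ω | X ω ≤ z}).toReal|
      = (- d z) / m := by
    intro z
    rw [key z, abs_of_nonpos (div_nonpos_of_nonpos_of_nonneg (hdnp z) hm0.le), neg_div]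
  have hbound : ∀ z : ℝ, |(volume {ω | Xs ω ≤ z}).toReal - (volume {ω | X ω ≤ z}).toReal|
      ≤ (- d m) / m := by
    intro z
    rw [habs z]
    gcongr
    linarith [hdmin z]
  have hbdd : BddAbove (Set.range
      (fun z : ℝ => |(volume {ω | Xs ω ≤ z}).toReal - (volume {ω | X ω ≤ z}).toReal|)) := by
    refine ⟨(- d m) / m, ?_⟩
    rintro x ⟨z, rfl⟩
    exact hbound z
  have hsup : (⨆ z : ℝ, |(volume {ω | Xs ω ≤ z}).toReal - (volume {ω | X ω ≤ z}).toReal|)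
      = |(volume {ω | Xs ω ≤ m}).toReal - (volume {ω | X ω ≤ m}).toReal| := by
    apply le_antisymm
    · apply ciSup_le
      intro z
      rw [habs m]
      exact hbound z
    · exact le_ciSup hbdd m
  constructor
  · rw [hsup, habs m, hnum]
  · exact hsup.symm
end

section
/- If X ~ Hyp(n; r, s) is Hypergeometric, then Y + 1 has the X-size biased distribution, where Y ~ Hyp(n-1; r-1, s); moreover d_W(X, X^s) = Var(X)/E[X] = s(r+s-n)/((r+s)(r+s-1)). -/
open MeasureTheory ProbabilityTheory Real Set



lemma vdm (a b m : ℕ) :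
    ∑ k ∈ Finset.range (m+1), a.choose k * b.choose (m-k) = (a+b).choose m := by
  rw [Nat.add_choose_eq, Finset.Nat.sum_antidiagonal_eq_sum_range_succ_mk]

lemma keyshift (a k : ℕ) : (k+1) * (a+1).choose (k+1) = (a+1) * a.choose k := by
  rw [mul_comm]; exact (Nat.add_one_mul_choose_eq a k).symm

lemma sum_mul_vdm (a b m : ℕ) :
    ∑ k ∈ Finset.range (m+2), k * ((a+1).choose k * b.choose (m+1-k))
      = (a+1) * (a+b).choose m := by
  rw [Finset.sum_range_succ']
  simp only [Nat.zero_mul, add_zero]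
  have h : ∀ j ∈ Finset.range (m+1), (j+1) * ((a+1).choose (j+1) * b.choose (m+1-(j+1)))
      = (a+1) * (a.choose j * b.choose (m-j)) := by
    intro j _
    have h1 : m + 1 - (j+1) = m - j := by omega
    rw [h1, ← mul_assoc, keyshift, mul_assoc]
  rw [Finset.sum_congr rfl h, ← Finset.mul_sum, vdm]

/-- Master lemma: integral of g(Z) for a discrete variable supported on {0,...,m}. -/
lemma integral_pmf {Ω : Type*} [MeasureSpace Ω] [IsProbabilityMeasure (volume : Measure Ω)]
    (Z : Ω → ℕ) (hZ : Measurable Z) (m : ℕ) (ρ : ℕ → ℝ) (hρ0 : ∀ k, 0 ≤ ρ k)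
    (hpmf : ∀ k, volume {ω | Z ω = k} = ENNReal.ofReal (ρ k))
    (hsum : ∑ k ∈ Finset.range (m+1), ρ k = 1) (g : ℕ → ℝ) :
    ∫ ω, g (Z ω) = ∑ k ∈ Finset.range (m+1), g k * ρ k := by
  set A : ℕ → Set Ω := fun k => {ω | Z ω = k} with hA
  have hAm : ∀ k, MeasurableSet (A k) := fun k => hZ (measurableSet_singleton k)
  have hdisj : Set.PairwiseDisjoint (↑(Finset.range (m+1))) A := by
    intro i _ j _ hij
    refine Set.disjoint_left.2 fun ω hi hj => hij ?_
    simp only [hA, Set.mem_setOf_eq] at hi hj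
    omega
  have hUm : MeasurableSet (⋃ k ∈ Finset.range (m+1), A k) :=
    (Finset.range (m+1)).measurableSet_biUnion (fun k _ => hAm k)
  have hU : volume (⋃ k ∈ Finset.range (m+1), A k) = 1 := by
    rw [measure_biUnion_finset hdisj (fun k _ => hAm k)]
    have h2 : ∀ k ∈ Finset.range (m+1), volume (A k) = ENNReal.ofReal (ρ k) := fun k _ => hpmf k
    rw [Finset.sum_congr rfl h2, ← ENNReal.ofReal_sum_of_nonneg (fun i _ => hρ0 i), hsum,
      ENNReal.ofReal_one]
  have hcompl : volume ((⋃ k ∈ Finset.range (m+1), A k)ᶜ) = 0 := by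
    rw [measure_compl hUm (measure_ne_top _ _), measure_univ, hU, tsub_self]
  set F : Ω → ℝ := fun ω => ∑ k ∈ Finset.range (m+1), (A k).indicator (fun _ => g k) ω with hF
  have hae : (fun ω => g (Z ω)) =ᵐ[volume] F := by
    rw [Filter.EventuallyEq, ae_iff]
    refine measure_mono_null ?_ hcompl
    intro ω hω
    simp only [Set.mem_setOf_eq] at hω
    simp only [Set.mem_compl_iff, Set.mem_iUnion, not_exists]
    intro k hk hωk
    apply hω
    have h3 : ∀ j, (A j).indicator (fun _ => g j) ω = if j = Z ω then g j else 0 := by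
      intro j
      simp only [Set.indicator, hA, Set.mem_setOf_eq]
      congr 1
      simp [eq_comm]
    simp only [Set.mem_setOf_eq, hA] at hωk
    rw [hF]
    simp only [h3]
    rw [Finset.sum_ite_eq' (Finset.range (m+1)) (Z ω) (fun j => g j),
      if_pos (show Z ω ∈ Finset.range (m+1) by rw [hωk]; exact hk)]
  rw [integral_congr_ae hae, hF,
    integral_finset_sum _ (fun k _ =>
      (integrable_indicator_iff (hAm k)).2 (integrableOn_const (measure_ne_top _ _)))]
  refine Finset.sum_congr rfl fun k _ => ?_
  rw [integral_indicator_const _ (hAm k), measureReal_def, hpmf k, smul_eq_mul, mul_comm,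
    ENNReal.toReal_ofReal (hρ0 k)]

lemma pmf_sum_le_one {Ω : Type*} [MeasureSpace Ω] [IsProbabilityMeasure (volume : Measure Ω)]
    (Z : Ω → ℕ) (hZ : Measurable Z) (ρ : ℕ → ℝ) (hρ0 : ∀ k, 0 ≤ ρ k)
    (hpmf : ∀ k, volume {ω | Z ω = k} = ENNReal.ofReal (ρ k)) (t : Finset ℕ) :
    ∑ k ∈ t, ρ k ≤ 1 := by
  set A : ℕ → Set Ω := fun k => {ω | Z ω = k} with hA
  have hAm : ∀ k, MeasurableSet (A k) := fun k => hZ (measurableSet_singleton k)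
  have hdisj : Set.PairwiseDisjoint (↑t) A := by
    intro i _ j _ hij
    refine Set.disjoint_left.2 fun ω hi hj => hij ?_
    simp only [hA, Set.mem_setOf_eq] at hi hj
    omega
  have h1 : ENNReal.ofReal (∑ k ∈ t, ρ k) ≤ 1 := by
    rw [ENNReal.ofReal_sum_of_nonneg (fun i _ => hρ0 i)]
    calc ∑ k ∈ t, ENNReal.ofReal (ρ k) = ∑ k ∈ t, volume (A k) := by
          exact Finset.sum_congr rfl fun k _ => (hpmf k).symm
      _ = volume (⋃ k ∈ t, A k) := (measure_biUnion_finset hdisj (fun k _ => hAm k)).symm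
      _ ≤ 1 := prob_le_one
  rwa [ENNReal.ofReal_le_one] at h1


/-- If `X ~ Hyp(n; r, s)` is Hypergeometric, then `Y + 1` has the `X`-size biased
distribution, where `Y ~ Hyp(n-1; r-1, s)`; moreover
`d_W(X, Y+1) = Var(X)/E[X] = s(r+s-n)/((r+s)(r+s-1))`. -/
theorem hypergeometric_size_bias
    {Ω : Type*} [MeasureSpace Ω] [IsProbabilityMeasure (volume : Measure Ω)]
    {Ω' : Type*} [MeasureSpace Ω'] [IsProbabilityMeasure (volume : Measure Ω')]
    (n r s : ℕ) (hn : 1 ≤ n) (hr : 1 ≤ r) (hs : 1 ≤ s) (hnrs : n ≤ r + s)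
    (X : Ω → ℕ) (Y : Ω' → ℕ) (hX : Measurable X) (hY : Measurable Y)
    (hXpmf : ∀ k : ℕ, volume {ω | X ω = k}
      = ENNReal.ofReal ((r.choose k * s.choose (n - k) : ℝ) / (r + s).choose n))
    (hYpmf : ∀ k : ℕ, volume {ω | Y ω = k}
      = ENNReal.ofReal (((r - 1).choose k * s.choose (n - 1 - k) : ℝ)
          / (r + s - 1).choose (n - 1))) :
    (∀ h : ℝ → ℝ, Measurable h → (∃ C, ∀ x, |h x| ≤ C) →
      ∫ ω, (X ω : ℝ) * h (X ω) = (∫ ω, (X ω : ℝ)) * ∫ ω', h ((Y ω' : ℝ) + 1))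
    ∧ (⨆ f : {f : ℝ → ℝ // LipschitzWith 1 f},
        |(∫ ω, f.1 (X ω)) - ∫ ω', f.1 ((Y ω' : ℝ) + 1)|)
        = (s : ℝ) * ((r : ℝ) + (s : ℝ) - (n : ℝ))
          / (((r : ℝ) + (s : ℝ)) * ((r : ℝ) + (s : ℝ) - 1))
    ∧ (∫ ω, ((X ω : ℝ) - ∫ ω'', (X ω'' : ℝ)) ^ 2) / (∫ ω, (X ω : ℝ))
        = (s : ℝ) * ((r : ℝ) + (s : ℝ) - (n : ℝ))
          / (((r : ℝ) + (s : ℝ)) * ((r : ℝ) + (s : ℝ) - 1)) := by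
  -- notation
  set p : ℕ → ℝ := fun k => (r.choose k * s.choose (n - k) : ℝ) / (r + s).choose n with hp
  set q : ℕ → ℝ := fun k => ((r - 1).choose k * s.choose (n - 1 - k) : ℝ)
      / (r + s - 1).choose (n - 1) with hq
  have hNpos : 0 < (r + s).choose n := Nat.choose_pos hnrs
  have hMpos : 0 < (r + s - 1).choose (n - 1) := Nat.choose_pos (by omega)
  have hN0 : ((r + s).choose n : ℝ) ≠ 0 := Nat.cast_ne_zero.2 hNpos.ne'
  have hM0 : ((r + s - 1).choose (n - 1) : ℝ) ≠ 0 := Nat.cast_ne_zero.2 hMpos.ne'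
  have hp0 : ∀ k, 0 ≤ p k := fun k => by rw [hp]; positivity
  have hq0 : ∀ k, 0 ≤ q k := fun k => by rw [hq]; positivity
  have hpsum : ∑ k ∈ Finset.range (n + 1), p k = 1 := by
    have h := vdm r s n
    have h2 : ∑ k ∈ Finset.range (n + 1), p k
        = ((∑ k ∈ Finset.range (n + 1), r.choose k * s.choose (n - k) : ℕ) : ℝ)
          / (r + s).choose n := by
      simp only [hp, Nat.cast_sum, Nat.cast_mul, Finset.sum_div]
    rw [h2, h, div_self hN0]
  have hqsum : ∑ k ∈ Finset.range (n - 1 + 1), q k = 1 := by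
    have h := vdm (r - 1) s (n - 1)
    have hrs : r - 1 + s = r + s - 1 := by omega
    rw [hrs] at h
    have h2 : ∑ k ∈ Finset.range (n - 1 + 1), q k
        = ((∑ k ∈ Finset.range (n - 1 + 1), (r - 1).choose k * s.choose (n - 1 - k) : ℕ) : ℝ)
          / (r + s - 1).choose (n - 1) := by
      simp only [hq, Nat.cast_sum, Nat.cast_mul, Finset.sum_div]
    rw [h2, h, div_self hM0]
  -- consistency forces r ≤ n
  have hrn : r ≤ n := by
    by_contra hcon
    push_neg at hcon
    have hle := pmf_sum_le_one X hX p hp0 hXpmf (Finset.range (n + 2))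
    rw [Finset.sum_range_succ, hpsum] at hle
    have hppos : 0 < p (n + 1) := by
      simp only [hp]
      have h1 : n - (n + 1) = 0 := by omega
      have h2 : 0 < r.choose (n + 1) := Nat.choose_pos (by omega)
      rw [h1, Nat.choose_zero_right]
      push_cast
      have : (0:ℝ) < r.choose (n + 1) := by exact_mod_cast h2
      positivity
    linarith
  -- the mean μ
  set μ : ℝ := (r : ℝ) * (r + s - 1).choose (n - 1) / (r + s).choose n with hμ
  have hμpos : 0 < μ := by
    rw [hμ]
    have h1 : (0:ℝ) < r := by exact_mod_cast hr
    have h2 : (0:ℝ) < (r + s - 1).choose (n - 1) := by exact_mod_cast hMpos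
    have h3 : (0:ℝ) < (r + s).choose n := by exact_mod_cast hNpos
    positivity
  -- key pointwise size-bias identity
  have hkey : ∀ j : ℕ, ((j : ℝ) + 1) * p (j + 1) = μ * q j := by
    intro j
    have h1 : (j + 1) * r.choose (j + 1) = r * (r - 1).choose j := by
      have h := keyshift (r - 1) j
      rwa [Nat.sub_add_cancel hr] at h
    have h2 : n - (j + 1) = n - 1 - j := by omega
    have h1r : ((j:ℝ) + 1) * r.choose (j + 1) = (r:ℝ) * (r - 1).choose j := by
      exact_mod_cast h1
    simp only [hp, hq, hμ, h2]
    field_simp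
    linear_combination ((s.choose (n - 1 - j) : ℝ)) * h1r
  -- shift lemma
  have hn1 : n - 1 + 1 = n := Nat.sub_add_cancel hn
  have hqsum' : ∑ j ∈ Finset.range n, q j = 1 := by rw [← hn1]; exact hqsum
  have hshift : ∀ g : ℕ → ℝ, ∑ k ∈ Finset.range (n + 1), g k * ((k : ℝ) * p k)
      = μ * ∑ j ∈ Finset.range n, g (j + 1) * q j := by
    intro g
    rw [Finset.sum_range_succ']
    simp only [Nat.cast_zero, zero_mul, mul_zero, add_zero]
    rw [Finset.mul_sum]
    refine Finset.sum_congr rfl fun j _ => ?_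
    push_cast
    rw [hkey j]
    ring
  have hEX : ∑ k ∈ Finset.range (n + 1), (k : ℝ) * p k = μ := by
    have h := hshift (fun _ => 1)
    simp only [one_mul] at h
    rw [h, hqsum', mul_one]
  set EY : ℝ := ∑ j ∈ Finset.range n, (j : ℝ) * q j with hEYdef
  have hEX2 : ∑ k ∈ Finset.range (n + 1), (k : ℝ) ^ 2 * p k = μ * (EY + 1) := by
    have h := hshift (fun k => (k : ℝ))
    have h2 : ∑ k ∈ Finset.range (n + 1), (k : ℝ) ^ 2 * p k
        = ∑ k ∈ Finset.range (n + 1), (k : ℝ) * ((k : ℝ) * p k) :=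
      Finset.sum_congr rfl fun k _ => by ring
    have h3 : ∀ j ∈ Finset.range n, ((j + 1 : ℕ) : ℝ) * q j = (j : ℝ) * q j + q j := by
      intro j _; push_cast; ring
    rw [h2, h, Finset.sum_congr rfl h3, Finset.sum_add_distrib, hqsum', hEYdef]
  have hrsR : (0:ℝ) < (r:ℝ) + (s:ℝ) := by
    have h0 : 0 < r + s := by omega
    exact_mod_cast h0
  have hrsR1 : (0:ℝ) < (r:ℝ) + (s:ℝ) - 1 := by
    have h0 : (1:ℝ) ≤ (r:ℝ) := by exact_mod_cast hr
    have h1 : (1:ℝ) ≤ (s:ℝ) := by exact_mod_cast hs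
    linarith
  have hnatμ : n * (r + s).choose n = (r + s) * (r + s - 1).choose (n - 1) := by
    have h := keyshift (r + s - 1) (n - 1)
    have e1 : n - 1 + 1 = n := by omega
    have e2 : r + s - 1 + 1 = r + s := by omega
    rwa [e1, e2] at h
  have hμval : μ = (n : ℝ) * r / ((r : ℝ) + s) := by
    have h := congrArg (Nat.cast : ℕ → ℝ) hnatμ
    push_cast at h
    rw [hμ, div_eq_div_iff hN0 (ne_of_gt hrsR)]
    linear_combination (-(r:ℝ)) * h
  have hEYval : EY = ((n:ℝ) - 1) * ((r:ℝ) - 1) / ((r:ℝ) + s - 1) := by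
    rcases eq_or_lt_of_le hr with h1 | h1
    · have hr1 : r = 1 := h1.symm
      have hz : EY = 0 := by
        rw [hEYdef]
        apply Finset.sum_eq_zero
        intro j hj
        match j with
        | 0 => simp
        | (j' + 1) =>
          have hc : (r - 1).choose (j' + 1) = 0 := by
            rw [hr1]
            exact Nat.choose_eq_zero_of_lt (by omega)
          simp only [hq, hc]
          simp
      rw [hz, hr1]
      norm_num
    · have hr2 : 2 ≤ r := h1
      have hn2 : 2 ≤ n := le_trans hr2 hrn
      have hnat : ∑ k ∈ Finset.range n, k * ((r - 1).choose k * s.choose (n - 1 - k))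
          = (r - 1) * (r + s - 2).choose (n - 2) := by
        have h := sum_mul_vdm (r - 2) s (n - 2)
        have e1 : n - 2 + 2 = n := by omega
        have e2 : r - 2 + 1 = r - 1 := by omega
        have e3 : r - 2 + s = r + s - 2 := by omega
        have e4 : n - 2 + 1 = n - 1 := by omega
        rwa [e1, e2, e3, e4] at h
      have hnat2 : (n - 1) * (r + s - 1).choose (n - 1) = (r + s - 1) * (r + s - 2).choose (n - 2) := by
        have h := keyshift (r + s - 2) (n - 2)
        have e1 : n - 2 + 1 = n - 1 := by omega
        have e2 : r + s - 2 + 1 = r + s - 1 := by omega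
        rwa [e1, e2] at h
      have hterm : ∀ j ∈ Finset.range n, (j:ℝ) * q j
          = ((j * ((r - 1).choose j * s.choose (n - 1 - j)) : ℕ) : ℝ)
            / ((r + s - 1).choose (n - 1)) := by
        intro j _
        simp only [hq]
        push_cast
        ring
      have hsum' : EY = (((r - 1) * (r + s - 2).choose (n - 2) : ℕ) : ℝ)
          / ((r + s - 1).choose (n - 1)) := by
        rw [hEYdef, Finset.sum_congr rfl hterm, ← Finset.sum_div, ← Nat.cast_sum, hnat]
      rw [hsum']
      have hc1 : (((r - 1) : ℕ) : ℝ) = (r:ℝ) - 1 := by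
        push_cast [Nat.cast_sub hr]
        ring
      have hc2 : (((n - 1) : ℕ) : ℝ) = (n:ℝ) - 1 := by
        push_cast [Nat.cast_sub hn]
        ring
      have hc3 : (((r + s - 1) : ℕ) : ℝ) = (r:ℝ) + s - 1 := by
        push_cast [Nat.cast_sub (show 1 ≤ r + s by omega)]
        ring
      have h2 : ((n:ℝ) - 1) * ((r + s - 1).choose (n - 1) : ℝ)
          = ((r:ℝ) + s - 1) * ((r + s - 2).choose (n - 2) : ℝ) := by
        have := congrArg (Nat.cast : ℕ → ℝ) hnat2
        push_cast at this
        rw [hc2] at this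
        rw [← hc3]
        exact_mod_cast this
      rw [div_eq_div_iff hM0 (ne_of_gt hrsR1), Nat.cast_mul, hc1]
      linear_combination (1 - (r:ℝ)) * h2
  -- integrals via master lemma
  have hIX : ∀ g : ℕ → ℝ, ∫ ω, g (X ω) = ∑ k ∈ Finset.range (n + 1), g k * p k :=
    integral_pmf X hX n p hp0 hXpmf hpsum
  have hIY : ∀ g : ℕ → ℝ, ∫ ω', g (Y ω') = ∑ j ∈ Finset.range (n - 1 + 1), g j * q j :=
    integral_pmf Y hY (n - 1) q hq0 hYpmf hqsum
  have hIY' : ∀ g : ℕ → ℝ, ∫ ω', g (Y ω') = ∑ j ∈ Finset.range n, g j * q j := by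
    intro g; rw [hIY g, hn1]
  have hEXint : ∫ ω, (X ω : ℝ) = μ := by
    have h := hIX (fun k => (k : ℝ))
    rw [h, hEX]
  have hT : EY + 1 - μ = (s : ℝ) * ((r : ℝ) + (s : ℝ) - (n : ℝ))
      / (((r : ℝ) + (s : ℝ)) * ((r : ℝ) + (s : ℝ) - 1)) := by
    rw [hEYval, hμval]
    have hnR : (n:ℝ) ≤ (r:ℝ) + (s:ℝ) := by exact_mod_cast hnrs
    field_simp
    ring
  have hTnonneg : 0 ≤ EY + 1 - μ := by
    rw [hT]
    apply div_nonneg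
    · apply mul_nonneg (Nat.cast_nonneg s)
      have hnR : (n:ℝ) ≤ (r:ℝ) + (s:ℝ) := by exact_mod_cast hnrs
      linarith
    · exact le_of_lt (mul_pos hrsR hrsR1)
  -- Part 1
  have part1 : ∀ h : ℝ → ℝ, Measurable h → (∃ C, ∀ x, |h x| ≤ C) →
      ∫ ω, (X ω : ℝ) * h (X ω) = (∫ ω, (X ω : ℝ)) * ∫ ω', h ((Y ω' : ℝ) + 1) := by
    intro h _ _
    have hL := hIX (fun k => (k : ℝ) * h (k : ℝ))
    have hR := hIY' (fun j => h ((j : ℝ) + 1))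
    rw [hL, hEXint, hR]
    have e1 : ∀ k ∈ Finset.range (n + 1),
        (k : ℝ) * h (k : ℝ) * p k = h (k : ℝ) * ((k : ℝ) * p k) := fun k _ => by ring
    have hsh := hshift (fun k => h (k : ℝ))
    rw [Finset.sum_congr rfl e1, hsh]
    congr 1
    refine Finset.sum_congr rfl fun j _ => ?_
    push_cast
    ring
  -- Part 3 : variance
  have hVar : (∫ ω, ((X ω : ℝ) - ∫ ω'', (X ω'' : ℝ)) ^ 2) = μ * (EY + 1 - μ) := by
    rw [hEXint]
    have hL := hIX (fun k => ((k : ℝ) - μ) ^ 2)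
    rw [hL]
    have e : ∀ k ∈ Finset.range (n + 1), ((k : ℝ) - μ) ^ 2 * p k
        = (k : ℝ) ^ 2 * p k - 2 * μ * ((k : ℝ) * p k) + μ ^ 2 * p k := fun k _ => by ring
    rw [Finset.sum_congr rfl e, Finset.sum_add_distrib, Finset.sum_sub_distrib,
      ← Finset.mul_sum, ← Finset.mul_sum, hEX2, hEX, hpsum]
    ring
  have part3 : (∫ ω, ((X ω : ℝ) - ∫ ω'', (X ω'' : ℝ)) ^ 2) / (∫ ω, (X ω : ℝ))
      = (s : ℝ) * ((r : ℝ) + (s : ℝ) - (n : ℝ))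
        / (((r : ℝ) + (s : ℝ)) * ((r : ℝ) + (s : ℝ) - 1)) := by
    rw [hVar, hEXint, mul_div_cancel_left₀ _ (ne_of_gt hμpos)]
    exact hT
  -- Part 2 : Wasserstein distance
  set w : ℕ → ℝ := fun k => ((k : ℝ) / μ - 1) * p k with hw
  have hμne : μ ≠ 0 := ne_of_gt hμpos
  have hwsum : ∑ k ∈ Finset.range (n + 1), w k = 0 := by
    have e : ∀ k ∈ Finset.range (n + 1), w k = ((k : ℝ) * p k) / μ - p k := by
      intro k _; simp only [hw]; field_simp
    rw [Finset.sum_congr rfl e, Finset.sum_sub_distrib, ← Finset.sum_div, hEX, hpsum,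
      div_self hμne]
    ring
  have hwk : ∑ k ∈ Finset.range (n + 1), (k : ℝ) * w k = EY + 1 - μ := by
    have e : ∀ k ∈ Finset.range (n + 1), (k : ℝ) * w k = ((k : ℝ) ^ 2 * p k) / μ - (k : ℝ) * p k := by
      intro k _; simp only [hw]; field_simp
    rw [Finset.sum_congr rfl e, Finset.sum_sub_distrib, ← Finset.sum_div, hEX2, hEX,
      mul_div_cancel_left₀ _ hμne]
  have hSneg : ∀ t, ∑ j ∈ Finset.range (t + 1), w j ≤ 0 := by
    intro t
    rcases le_or_gt n t with htn | htn
    · -- t ≥ n : partial sum equals full sum = 0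
      have : ∑ j ∈ Finset.range (t + 1), w j = ∑ j ∈ Finset.range (n + 1), w j := by
        rw [← Finset.sum_range_add_sum_Ico w (show n + 1 ≤ t + 1 by omega)]
        have hz : ∀ j ∈ Finset.Ico (n + 1) (t + 1), w j = 0 := by
          intro j hj
          have hjn : n < j := by
            have := (Finset.mem_Ico.1 hj).1; omega
          have hc : r.choose j = 0 := Nat.choose_eq_zero_of_lt (by omega)
          simp only [hw, hp, hc]
          simp
        rw [Finset.sum_congr rfl hz]
        simp
      rw [this, hwsum]
    · have e : ∀ j ∈ Finset.range (t + 1), w j = ((j : ℝ) * p j) / μ - p j := by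
        intro k _; simp only [hw]; field_simp
      rw [Finset.sum_congr rfl e, Finset.sum_sub_distrib, ← Finset.sum_div, sub_nonpos,
        div_le_iff₀ hμpos]
      set A := ∑ j ∈ Finset.range (t + 1), (j : ℝ) * p j with hA
      set P := ∑ j ∈ Finset.range (t + 1), p j with hP
      set B := ∑ j ∈ Finset.Ico (t + 1) (n + 1), (j : ℝ) * p j with hB
      set Q := ∑ j ∈ Finset.Ico (t + 1) (n + 1), p j with hQ
      have hAB : A + B = μ := by
        rw [hA, hB, Finset.sum_range_add_sum_Ico _ (show t + 1 ≤ n + 1 by omega), hEX]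
      have hPQ : P + Q = 1 := by
        rw [hP, hQ, Finset.sum_range_add_sum_Ico _ (show t + 1 ≤ n + 1 by omega), hpsum]
      have hAtP : A ≤ (t : ℝ) * P := by
        rw [hA, hP, Finset.mul_sum]
        refine Finset.sum_le_sum fun j hj => ?_
        have hjt : (j : ℝ) ≤ (t : ℝ) := by
          have := Finset.mem_range.1 hj
          exact_mod_cast Nat.lt_succ_iff.1 this
        exact mul_le_mul_of_nonneg_right hjt (hp0 j)
      have hBtQ : (t : ℝ) * Q ≤ B := by
        rw [hB, hQ, Finset.mul_sum]
        refine Finset.sum_le_sum fun j hj => ?_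
        have hjt : (t : ℝ) ≤ (j : ℝ) := by
          have := (Finset.mem_Ico.1 hj).1
          exact_mod_cast Nat.le_of_succ_le this
        exact mul_le_mul_of_nonneg_right hjt (hp0 j)
      have hP0 : (0:ℝ) ≤ P := Finset.sum_nonneg fun j _ => hp0 j
      have hQ0 : (0:ℝ) ≤ Q := Finset.sum_nonneg fun j _ => hp0 j
      have hA1 : A * P + A * Q = A := by rw [← mul_add, hPQ, mul_one]
      have hPμ : P * A + P * B = P * μ := by rw [← mul_add, hAB]
      have hAQ : A * Q ≤ (t : ℝ) * P * Q := mul_le_mul_of_nonneg_right hAtP hQ0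
      have hBP : (t : ℝ) * Q * P ≤ B * P := mul_le_mul_of_nonneg_right hBtQ hP0
      linarith [hAQ, hBP, hA1, hPμ]
  have habel : ∀ F : ℕ → ℝ, ∑ k ∈ Finset.range (n + 1), F k * w k
      = -∑ i ∈ Finset.range n, (F (i + 1) - F i) * ∑ j ∈ Finset.range (i + 1), w j := by
    intro F
    have h := Finset.sum_range_by_parts F w (n + 1)
    simp only [smul_eq_mul, Nat.add_sub_cancel] at h
    rw [h, hwsum, mul_zero, zero_sub]
  have hTsum : ∑ i ∈ Finset.range n, (∑ j ∈ Finset.range (i + 1), w j) = -(EY + 1 - μ) := by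
    have h := habel (fun k => (k : ℝ))
    rw [hwk] at h
    have e : ∀ i ∈ Finset.range n,
        (((i + 1 : ℕ) : ℝ) - (i : ℝ)) * (∑ j ∈ Finset.range (i + 1), w j)
          = ∑ j ∈ Finset.range (i + 1), w j := by
      intro i _
      have : ((i + 1 : ℕ) : ℝ) - (i : ℝ) = 1 := by push_cast; ring
      rw [this, one_mul]
    rw [Finset.sum_congr rfl e] at h
    linarith
  have hbound : ∀ f : ℝ → ℝ, LipschitzWith 1 f →
      |(∫ ω, f (X ω)) - ∫ ω', f ((Y ω' : ℝ) + 1)| ≤ EY + 1 - μ := by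
    intro f hf
    have hIXf := hIX (fun k => f (k : ℝ))
    have hIYf := hIY' (fun j => f ((j : ℝ) + 1))
    have hsh := hshift (fun k => f (k : ℝ))
    have hYf : ∫ ω', f ((Y ω' : ℝ) + 1)
        = μ⁻¹ * ∑ k ∈ Finset.range (n + 1), f (k : ℝ) * ((k : ℝ) * p k) := by
      rw [hIYf, hsh, ← mul_assoc, inv_mul_cancel₀ hμne, one_mul]
      refine Finset.sum_congr rfl fun j _ => ?_
      push_cast
      ring
    have hD : (∫ ω, f (X ω)) - ∫ ω', f ((Y ω' : ℝ) + 1)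
        = -∑ k ∈ Finset.range (n + 1), f (k : ℝ) * w k := by
      rw [hIXf, hYf, Finset.mul_sum, ← Finset.sum_sub_distrib, ← Finset.sum_neg_distrib]
      refine Finset.sum_congr rfl fun k _ => ?_
      simp only [hw]
      field_simp
      ring
    have hab := habel (fun k => f (k : ℝ))
    rw [hD, hab, neg_neg]
    calc |∑ i ∈ Finset.range n, (f ((i + 1 : ℕ) : ℝ) - f (i : ℝ)) * ∑ j ∈ Finset.range (i + 1), w j|
        ≤ ∑ i ∈ Finset.range n, |(f ((i + 1 : ℕ) : ℝ) - f (i : ℝ)) * ∑ j ∈ Finset.range (i + 1), w j| :=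
          Finset.abs_sum_le_sum_abs _ _
      _ ≤ ∑ i ∈ Finset.range n, -(∑ j ∈ Finset.range (i + 1), w j) := by
          refine Finset.sum_le_sum fun i _ => ?_
          have h1 : |f ((i + 1 : ℕ) : ℝ) - f (i : ℝ)| ≤ 1 := by
            have hd := hf.dist_le_mul ((i + 1 : ℕ) : ℝ) ((i : ℕ) : ℝ)
            rw [Real.dist_eq, Real.dist_eq] at hd
            have e : |((i + 1 : ℕ) : ℝ) - ((i : ℕ) : ℝ)| = 1 := by
              push_cast
              simp
            rw [e] at hd
            simpa using hd
          have h2 : |∑ j ∈ Finset.range (i + 1), w j| = -(∑ j ∈ Finset.range (i + 1), w j) :=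
            abs_of_nonpos (hSneg i)
          rw [abs_mul, h2]
          have h3 : (0:ℝ) ≤ -(∑ j ∈ Finset.range (i + 1), w j) := neg_nonneg.2 (hSneg i)
          calc |f ((i + 1 : ℕ) : ℝ) - f (i : ℝ)| * -(∑ j ∈ Finset.range (i + 1), w j)
              ≤ 1 * -(∑ j ∈ Finset.range (i + 1), w j) := mul_le_mul_of_nonneg_right h1 h3
            _ = -(∑ j ∈ Finset.range (i + 1), w j) := one_mul _
      _ = EY + 1 - μ := by
          rw [Finset.sum_neg_distrib, hTsum, neg_neg]
  refine ⟨part1, ?_, part3⟩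
  have hbdd : BddAbove (Set.range fun f : {f : ℝ → ℝ // LipschitzWith 1 f} =>
      |(∫ ω, f.1 (X ω)) - ∫ ω', f.1 ((Y ω' : ℝ) + 1)|) := by
    refine ⟨EY + 1 - μ, ?_⟩
    rintro x ⟨f, rfl⟩
    exact hbound f.1 f.2
  apply le_antisymm
  · apply Real.iSup_le
    · intro f
      exact (hbound f.1 f.2).trans (le_of_eq hT)
    · exact hT ▸ hTnonneg
  · have hY1 : ∫ ω', ((Y ω' : ℝ) + 1) = EY + 1 := by
      have h := hIY' (fun j => (j : ℝ) + 1)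
      rw [h]
      have e : ∀ j ∈ Finset.range n, ((j : ℝ) + 1) * q j = (j : ℝ) * q j + q j :=
        fun j _ => by ring
      rw [Finset.sum_congr rfl e, Finset.sum_add_distrib, hqsum', hEYdef]
    have hid : |(∫ ω, (⟨id, LipschitzWith.id⟩ : {f : ℝ → ℝ // LipschitzWith 1 f}).1 (X ω))
        - ∫ ω', (⟨id, LipschitzWith.id⟩ : {f : ℝ → ℝ // LipschitzWith 1 f}).1 ((Y ω' : ℝ) + 1)|
        = EY + 1 - μ := by
      simp only [id_eq]
      rw [hEXint, hY1, abs_sub_comm, abs_of_nonneg (by linarith [hTnonneg])]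
    calc (s : ℝ) * ((r : ℝ) + (s : ℝ) - (n : ℝ))
          / (((r : ℝ) + (s : ℝ)) * ((r : ℝ) + (s : ℝ) - 1)) = EY + 1 - μ := hT.symm
      _ = |(∫ ω, (⟨id, LipschitzWith.id⟩ : {f : ℝ → ℝ // LipschitzWith 1 f}).1 (X ω))
          - ∫ ω', (⟨id, LipschitzWith.id⟩ : {f : ℝ → ℝ // LipschitzWith 1 f}).1 ((Y ω' : ℝ) + 1)| := hid.symm
      _ ≤ _ := le_ciSup hbdd _
end

section
/- If Y has the X₁-non-zero biased distribution and is independent of X₁, then E|Y − X₁| ≤ (3 / (2 Var(X₁))) · E|X₁ − E[X₁]|³. -/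
open MeasureTheory ProbabilityTheory Real Set

/-- `Y` has the `X`-non-zero biased distribution:
`E[(X − E[X]) f(X)] = Var(X) E[f'(Y)]` for all Lipschitz `f`. -/
def HasNonZeroBiasedDist {Ω Ω' : Type*} [MeasureSpace Ω] [MeasureSpace Ω']
    (X : Ω → ℝ) (Y : Ω' → ℝ) : Prop :=
  ∀ f : ℝ → ℝ, (∃ K : NNReal, LipschitzWith K f) → Differentiable ℝ f →
    ∫ ω, (X ω - ∫ ω', X ω') * f (X ω)
      = (∫ ω, (X ω - ∫ ω', X ω') ^ 2) * ∫ ω, deriv f (Y ω)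

section helpers
open intervalIntegral


noncomputable def nbF (m : ℝ) (n : ℕ) (x : ℝ) : ℝ := ∫ t in m..x, min |t - m| (n : ℝ)

lemma nbg_cont (m : ℝ) (n : ℕ) : Continuous (fun x : ℝ => min |x - m| (n : ℝ)) := by
  continuity

lemma nbF_hasDeriv (m : ℝ) (n : ℕ) (x : ℝ) :
    HasDerivAt (nbF m n) (min |x - m| (n : ℝ)) x := by
  refine intervalIntegral.integral_hasDerivAt_right
    ((nbg_cont m n).intervalIntegrable _ _)
    ((nbg_cont m n).stronglyMeasurable.stronglyMeasurableAtFilter)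
    (nbg_cont m n).continuousAt

lemma nbF_diff (m : ℝ) (n : ℕ) : Differentiable ℝ (nbF m n) :=
  fun x => (nbF_hasDeriv m n x).differentiableAt

lemma nbF_deriv (m : ℝ) (n : ℕ) (x : ℝ) : deriv (nbF m n) x = min |x - m| (n : ℝ) :=
  (nbF_hasDeriv m n x).deriv

lemma nbF_lip (m : ℝ) (n : ℕ) : LipschitzWith n (nbF m n) := by
  apply lipschitzWith_of_nnnorm_deriv_le (nbF_diff m n)
  intro x
  rw [← NNReal.coe_le_coe]
  simp only [coe_nnnorm, nbF_deriv, Real.norm_eq_abs]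
  rw [abs_le]
  constructor
  · have : (0:ℝ) ≤ min |x - m| n := le_min (abs_nonneg _) (Nat.cast_nonneg n)
    push_cast; linarith
  · push_cast; exact min_le_right _ _

lemma integral_sub_const (m x : ℝ) : (∫ t in m..x, (t - m)) = (x - m) ^ 2 / 2 := by
  rw [intervalIntegral.integral_sub intervalIntegrable_id intervalIntegrable_const,
    integral_id, intervalIntegral.integral_const, smul_eq_mul]
  ring

lemma nbF_abs_le (m : ℝ) (n : ℕ) (x : ℝ) : |nbF m n x| ≤ (x - m) ^ 2 / 2 := by
  have hginteg : ∀ a b : ℝ, IntervalIntegrable (fun t => min |t - m| (n:ℝ)) volume a b :=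
    fun a b => (nbg_cont m n).intervalIntegrable _ _
  have hnn : ∀ t : ℝ, 0 ≤ min |t - m| (n:ℝ) := fun t => le_min (abs_nonneg _) (Nat.cast_nonneg n)
  rcases le_total m x with h | h
  · have h1 : 0 ≤ nbF m n x :=
      intervalIntegral.integral_nonneg h (fun t _ => hnn t)
    have h2 : nbF m n x ≤ ∫ t in m..x, (t - m) := by
      apply intervalIntegral.integral_mono_on h (hginteg m x)
        ((intervalIntegrable_id).sub intervalIntegrable_const)
      intro t ht
      calc min |t - m| (n:ℝ) ≤ |t - m| := min_le_left _ _
        _ = t - m := abs_of_nonneg (by linarith [ht.1])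
    rw [integral_sub_const] at h2
    rw [abs_of_nonneg h1]; exact h2
  · have e : nbF m n x = -∫ t in x..m, min |t - m| (n:ℝ) := by
      rw [nbF, intervalIntegral.integral_symm]
    have h1 : 0 ≤ ∫ t in x..m, min |t - m| (n:ℝ) :=
      intervalIntegral.integral_nonneg h (fun t _ => hnn t)
    have h2 : (∫ t in x..m, min |t - m| (n:ℝ)) ≤ ∫ t in x..m, (m - t) := by
      apply intervalIntegral.integral_mono_on h (hginteg x m)
        (intervalIntegrable_const.sub intervalIntegrable_id)
      intro t ht
      calc min |t - m| (n:ℝ) ≤ |t - m| := min_le_left _ _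
        _ = m - t := by rw [abs_of_nonpos (by linarith [ht.2] : t - m ≤ 0)]; ring
    have h3 : (∫ t in x..m, (m - t)) = (x - m) ^ 2 / 2 := by
      have : (∫ t in x..m, (m - t)) = -∫ t in x..m, (t - m) := by
        rw [← intervalIntegral.integral_neg]; congr 1; funext t; ring
      rw [this, ← intervalIntegral.integral_symm, integral_sub_const]
    rw [e, abs_neg, abs_of_nonneg h1]
    rw [h3] at h2; exact h2

lemma nbF_eq_of_le (m : ℝ) (n : ℕ) (x : ℝ) (hx : |x - m| ≤ n) :
    nbF m n x = (x - m) * |x - m| / 2 := by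
  have hcong : nbF m n x = ∫ t in m..x, |t - m| := by
    apply intervalIntegral.integral_congr
    intro t ht
    have : |t - m| ≤ |x - m| := by
      rcases le_total m x with h | h
      · rw [Set.uIcc_of_le h] at ht
        rw [abs_of_nonneg (by linarith [ht.1]), abs_of_nonneg (by linarith : (0:ℝ) ≤ x - m)]
        linarith [ht.2]
      · rw [Set.uIcc_of_ge h] at ht
        rw [abs_of_nonpos (by linarith [ht.2]), abs_of_nonpos (by linarith : x - m ≤ 0)]
        linarith [ht.1]
    exact min_eq_left (this.trans hx)
  rw [hcong]
  rcases le_total m x with h | h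
  · have : (∫ t in m..x, |t - m|) = ∫ t in m..x, (t - m) := by
      apply intervalIntegral.integral_congr
      intro t ht
      rw [Set.uIcc_of_le h] at ht
      exact abs_of_nonneg (by linarith [ht.1])
    rw [this, integral_sub_const, abs_of_nonneg (by linarith : (0:ℝ) ≤ x - m)]
    ring
  · have : (∫ t in m..x, |t - m|) = ∫ t in m..x, (m - t) := by
      apply intervalIntegral.integral_congr
      intro t ht
      rw [Set.uIcc_of_ge h] at ht
      show |t - m| = m - t
      rw [abs_of_nonpos (by linarith [ht.2] : t - m ≤ 0)]; ring
    rw [this]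
    have h2 : (∫ t in m..x, (m - t)) = -∫ t in m..x, (t - m) := by
      rw [← intervalIntegral.integral_neg]; congr 1; funext t; ring
    rw [h2, integral_sub_const, abs_of_nonpos (by linarith : x - m ≤ 0)]
    ring


lemma nb_aux_bound (z f : ℝ) (hf : |f| ≤ z^2/2) : |z * f| ≤ |z|^3 / 2 := by
  rw [abs_mul]
  calc |z| * |f| ≤ |z| * (z^2/2) := mul_le_mul_of_nonneg_left hf (abs_nonneg z)
    _ = |z|^3/2 := by rw [← sq_abs]; ring

lemma nb_amgm1 (z c : ℝ) (hc : 0 < c) : |z| ≤ (|z|^3 + 2*c^3)/(3*c^2) := by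
  rw [le_div_iff₀ (by positivity)]
  nlinarith [sq_nonneg (|z| - c), abs_nonneg z,
    mul_nonneg (mul_nonneg (abs_nonneg z) (abs_nonneg z)) (abs_nonneg z)]

lemma nb_amgm2 (z c : ℝ) (hc : 0 < c) : z^2 ≤ (2*|z|^3 + c^3)/(3*c) := by
  rw [le_div_iff₀ (by positivity)]
  nlinarith [sq_nonneg (|z| - c), abs_nonneg z, sq_abs z,
    mul_nonneg (mul_nonneg (abs_nonneg z) (abs_nonneg z)) hc.le]

end helpers

/-- If `Y` has the `X₁`-non-zero biased distribution and is independent of `X₁`, then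
`E|Y − X₁| ≤ (3 / (2 Var(X₁))) · E|X₁ − E[X₁]|³`. -/
theorem nonzero_bias_L1_bound
    {Ω : Type*} [MeasureSpace Ω] [IsProbabilityMeasure (volume : Measure Ω)]
    (X Y : Ω → ℝ) (hX : Measurable X) (hY : Measurable Y)
    (h3 : Integrable (fun ω => |X ω| ^ 3))
    (hvar : 0 < ∫ ω, (X ω - ∫ ω', X ω') ^ 2)
    (hnz : HasNonZeroBiasedDist X Y)
    (hindep : IndepFun Y X volume) :
    ∫ ω, |Y ω - X ω|
      ≤ 3 / (2 * ∫ ω, (X ω - ∫ ω', X ω') ^ 2) * ∫ ω, |X ω - ∫ ω', X ω'| ^ 3 := by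
  set m : ℝ := ∫ ω', X ω' with hm
  set σ2 : ℝ := ∫ ω, (X ω - m) ^ 2 with hσ2
  set μ3 : ℝ := ∫ ω, |X ω - m| ^ 3 with hμ3
  have hσ2pos : 0 < σ2 := hvar
  -- basic integrability
  have hZm : Measurable fun ω => X ω - m := hX.sub measurable_const
  have hZ3m : Measurable fun ω => |X ω - m| ^ 3 := (hZm.abs.pow_const 3)
  have hZ3int : Integrable (fun ω => |X ω - m| ^ 3) := by
    refine Integrable.mono' ((h3.const_mul 4).add (integrable_const (4 * |m|^3)))
      hZ3m.aestronglyMeasurable (Filter.Eventually.of_forall fun ω => ?_)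
    have h1 : |X ω - m| ≤ |X ω| + |m| := abs_sub _ _
    have h2 : (0:ℝ) ≤ |X ω| := abs_nonneg _
    have h3' : (0:ℝ) ≤ |m| := abs_nonneg _
    have h4 : (0:ℝ) ≤ |X ω - m| := abs_nonneg _
    rw [Real.norm_eq_abs, abs_of_nonneg (by positivity)]
    simp only [Pi.add_apply]
    nlinarith [sq_nonneg (|X ω| - |m|), mul_nonneg (mul_nonneg h2 h2) h3',
      mul_nonneg (mul_nonneg h3' h3') h2, sq_nonneg (|X ω| + |m|),
      mul_le_mul (mul_le_mul h1 h1 h4 (by positivity)) h1 h4 (by positivity)]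
  have hZ3nonneg : (0:ℝ) ≤ μ3 := by
    rw [hμ3]; exact integral_nonneg fun ω => by positivity
  have hμ3half : Integrable (fun ω => |X ω - m| ^ 3 / 2) := hZ3int.div_const 2
  have hZ2int : Integrable (fun ω => (X ω - m) ^ 2) := by
    refine Integrable.mono' (hZ3int.add (integrable_const 1))
      ((hZm.pow_const 2).aestronglyMeasurable) (Filter.Eventually.of_forall fun ω => ?_)
    have h4 : (0:ℝ) ≤ |X ω - m| := abs_nonneg _
    rw [Real.norm_eq_abs, abs_of_nonneg (by positivity), ← sq_abs]
    simp only [Pi.add_apply]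
    nlinarith [sq_nonneg (|X ω - m| - 1)]
  have hZabsint : Integrable (fun ω => |X ω - m|) := by
    refine Integrable.mono' (hZ3int.add (integrable_const 1))
      (hZm.abs.aestronglyMeasurable) (Filter.Eventually.of_forall fun ω => ?_)
    have h4 : (0:ℝ) ≤ |X ω - m| := abs_nonneg _
    rw [Real.norm_eq_abs, abs_of_nonneg h4]
    simp only [Pi.add_apply]
    nlinarith [sq_nonneg (|X ω - m| - 1), sq_nonneg (|X ω - m| + 1), sq_nonneg (|X ω - m|)]
  -- μ3 > 0
  have hμ3pos : 0 < μ3 := by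
    rcases lt_or_eq_of_le hZ3nonneg with h | h
    · exact h
    · exfalso
      have h0 : ∫ ω, |X ω - m| ^ 3 = 0 := h.symm
      rw [integral_eq_zero_iff_of_nonneg (fun ω => by positivity) hZ3int] at h0
      have hz2 : (fun ω => (X ω - m) ^ 2) =ᵐ[volume] 0 := by
        filter_upwards [h0] with ω hω
        simp only [Pi.zero_apply] at hω ⊢
        have h5 : |X ω - m| = 0 := pow_eq_zero_iff three_ne_zero |>.mp hω
        have h6 : X ω - m = 0 := abs_eq_zero.mp h5
        rw [h6]; norm_num
      have : σ2 = 0 := by rw [hσ2, integral_congr_ae hz2]; simp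
      linarith
  -- Step A: for each n, the bias identity with the truncated primitive
  have keyA : ∀ n : ℕ, (∫ ω, min |Y ω - m| (n:ℝ)) ≤ μ3 / (2 * σ2) := by
    intro n
    have heq := hnz (nbF m n) ⟨n, nbF_lip m n⟩ (nbF_diff m n)
    rw [← hm] at heq
    have hder : (∫ ω, deriv (nbF m n) (Y ω)) = ∫ ω, min |Y ω - m| (n:ℝ) := by
      congr 1; funext ω; rw [nbF_deriv]
    rw [hder, ← hσ2] at heq
    -- LHS ≤ μ3/2
    have hlint : Integrable (fun ω => (X ω - m) * nbF m n (X ω)) := by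
      refine Integrable.mono' hμ3half
        (hZm.mul ((nbF_diff m n).continuous.measurable.comp hX)).aestronglyMeasurable
        (Filter.Eventually.of_forall fun ω => ?_)
      rw [Real.norm_eq_abs]
      exact nb_aux_bound _ _ (nbF_abs_le m n (X ω))
    have hle : (∫ ω, (X ω - m) * nbF m n (X ω)) ≤ μ3 / 2 := by
      have := integral_mono hlint hμ3half (fun ω =>
        (le_abs_self _).trans (nb_aux_bound _ _ (nbF_abs_le m n (X ω))))
      simpa [integral_div] using this
    rw [heq] at hle
    rw [le_div_iff₀ (by linarith)]
    linarith [hle]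
  -- Step B: monotone convergence gives E|Y - m| ≤ μ3/(2σ2)
  have hYm : Measurable fun ω => |Y ω - m| := (hY.sub measurable_const).abs
  have hminint : ∀ n : ℕ, Integrable (fun ω => min |Y ω - m| (n:ℝ)) := by
    intro n
    refine Integrable.mono' (integrable_const (n:ℝ))
      (hYm.min measurable_const).aestronglyMeasurable
      (Filter.Eventually.of_forall fun ω => ?_)
    rw [Real.norm_eq_abs, abs_of_nonneg (le_min (abs_nonneg _) (Nat.cast_nonneg n))]
    exact min_le_right _ _
  have hminnn : ∀ n : ℕ, (0:Ω → ℝ) ≤ᵐ[volume] fun ω => min |Y ω - m| (n:ℝ) := by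
    intro n
    refine Filter.Eventually.of_forall fun ω => ?_
    simp only [Pi.zero_apply]
    exact le_min (abs_nonneg _) (Nat.cast_nonneg n)
  have hlin : (∫⁻ ω, ENNReal.ofReal |Y ω - m|) ≤ ENNReal.ofReal (μ3 / (2 * σ2)) := by
    have hsup : ∀ ω, (⨆ n : ℕ, ENNReal.ofReal (min |Y ω - m| (n:ℝ)))
        = ENNReal.ofReal |Y ω - m| := by
      intro ω
      apply le_antisymm
      · exact iSup_le fun n => ENNReal.ofReal_le_ofReal (min_le_left _ _)
      · have : ENNReal.ofReal |Y ω - m|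
            = ENNReal.ofReal (min |Y ω - m| (⌈|Y ω - m|⌉₊ : ℝ)) := by
          rw [min_eq_left (Nat.le_ceil _)]
        rw [this]
        exact le_iSup (fun n : ℕ => ENNReal.ofReal (min |Y ω - m| (n:ℝ))) _
    have hmono : Monotone fun (n : ℕ) (ω : Ω) => ENNReal.ofReal (min |Y ω - m| (n:ℝ)) := by
      intro a b hab ω
      exact ENNReal.ofReal_le_ofReal (min_le_min le_rfl (by exact_mod_cast hab))
    calc (∫⁻ ω, ENNReal.ofReal |Y ω - m|)
        = ∫⁻ ω, ⨆ n : ℕ, ENNReal.ofReal (min |Y ω - m| (n:ℝ)) := by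
          congr 1; funext ω; rw [hsup]
      _ = ⨆ n : ℕ, ∫⁻ ω, ENNReal.ofReal (min |Y ω - m| (n:ℝ)) :=
          lintegral_iSup (fun n => (hYm.min measurable_const).ennreal_ofReal) hmono
      _ ≤ ENNReal.ofReal (μ3 / (2 * σ2)) := by
          refine iSup_le fun n => ?_
          rw [← ofReal_integral_eq_lintegral_ofReal (hminint n) (hminnn n)]
          exact ENNReal.ofReal_le_ofReal (keyA n)
  have hYmint : Integrable (fun ω => |Y ω - m|) := by
    refine ⟨hYm.aestronglyMeasurable, ?_⟩
    rw [hasFiniteIntegral_iff_ofReal (Filter.Eventually.of_forall fun ω => abs_nonneg _)]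
    exact lt_of_le_of_lt hlin ENNReal.ofReal_lt_top
  have hYmbound : (∫ ω, |Y ω - m|) ≤ μ3 / (2 * σ2) := by
    rw [integral_eq_lintegral_of_nonneg_ae
      (Filter.Eventually.of_forall fun ω => abs_nonneg _) hYm.aestronglyMeasurable]
    exact ENNReal.toReal_le_of_le_ofReal (by positivity) hlin
  -- Step C: E|X - m| ≤ μ3 / σ2
  set c : ℝ := μ3 ^ ((1:ℝ)/3) with hc
  have hcpos : 0 < c := Real.rpow_pos_of_pos hμ3pos _
  have hc3 : c ^ 3 = μ3 := by
    rw [hc, ← Real.rpow_natCast (μ3 ^ ((1:ℝ)/3)) 3, ← Real.rpow_mul hZ3nonneg]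
    norm_num
  have hXmbound : (∫ ω, |X ω - m|) ≤ μ3 / σ2 := by
    have h1 : (∫ ω, |X ω - m|) ≤ c := by
      have hint2 : Integrable (fun ω => (|X ω - m|^3 + 2*c^3)/(3*c^2)) :=
        (hZ3int.add (integrable_const _)).div_const _
      have := integral_mono hZabsint hint2 (fun ω => nb_amgm1 _ _ hcpos)
      rw [integral_div, integral_add hZ3int (integrable_const _), integral_const,
        probReal_univ] at this
      simp only [ENNReal.toReal_one, one_smul, ← hμ3] at this
      calc (∫ ω, |X ω - m|) ≤ (μ3 + 2*c^3)/(3*c^2) := this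
        _ = c := by rw [← hc3]; field_simp; ring
    have h2 : σ2 ≤ c ^ 2 := by
      have hint2 : Integrable (fun ω => (2*|X ω - m|^3 + c^3)/(3*c)) :=
        ((hZ3int.const_mul 2).add (integrable_const _)).div_const _
      have := integral_mono hZ2int hint2 (fun ω => nb_amgm2 _ _ hcpos)
      rw [integral_div, integral_add (hZ3int.const_mul 2) (integrable_const _),
        integral_const, probReal_univ, integral_const_mul] at this
      simp only [ENNReal.toReal_one, one_smul, ← hμ3] at this
      calc σ2 ≤ (2*μ3 + c^3)/(3*c) := this
        _ = c ^ 2 := by rw [← hc3]; field_simp; ring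
    rw [le_div_iff₀ hσ2pos]
    calc (∫ ω, |X ω - m|) * σ2 ≤ c * c^2 :=
        mul_le_mul h1 h2 hσ2pos.le hcpos.le
      _ = μ3 := by rw [← hc3]; ring
  -- Step D: combine
  have hsumint : Integrable (fun ω => |Y ω - m| + |X ω - m|) := hYmint.add hZabsint
  have hYXint : Integrable (fun ω => |Y ω - X ω|) := by
    refine Integrable.mono' hsumint ((hY.sub hX).abs.aestronglyMeasurable)
      (Filter.Eventually.of_forall fun ω => ?_)
    rw [Real.norm_eq_abs, abs_abs]
    calc |Y ω - X ω| = |(Y ω - m) + (m - X ω)| := by ring_nf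
      _ ≤ |Y ω - m| + |m - X ω| := abs_add_le _ _
      _ = |Y ω - m| + |X ω - m| := by rw [abs_sub_comm m (X ω)]
  have hfinal : (∫ ω, |Y ω - X ω|) ≤ (∫ ω, |Y ω - m|) + ∫ ω, |X ω - m| := by
    have := integral_mono hYXint hsumint (fun ω => by
      calc |Y ω - X ω| = |(Y ω - m) + (m - X ω)| := by ring_nf
        _ ≤ |Y ω - m| + |m - X ω| := abs_add_le _ _
        _ = |Y ω - m| + |X ω - m| := by rw [abs_sub_comm m (X ω)])
    rwa [integral_add hYmint hZabsint] at this
  calc (∫ ω, |Y ω - X ω|) ≤ (∫ ω, |Y ω - m|) + ∫ ω, |X ω - m| := hfinal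
    _ ≤ μ3 / (2 * σ2) + μ3 / σ2 := add_le_add hYmbound hXmbound
    _ = 3 / (2 * σ2) * μ3 := by field_simp; ring
end

section
/- Quantitative Taylor bound for the Stein solution of indicator test functions: for all x, u, z ∈ ℝ, |f_z(x+u) − f_z(x) − f_z'(x) u| ≤ (u²/2)(|x| + √(2π)/4) + |u| · 1_{z − max(u,0) < x ≤ z − min(u,0)}, where f_z'(z) is defined as z f_z(z) + 1 − Φ(z). -/
open MeasureTheory ProbabilityTheory Real Set Filter intervalIntegral

noncomputable def sphi (x : ℝ) : ℝ := Real.exp (-x^2/2) / Real.sqrt (2*π)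
noncomputable def sPhi (x : ℝ) : ℝ := ((gaussianReal 0 1) (Set.Iic x)).toReal

lemma gaussianPDFReal_eq_sphi : gaussianPDFReal 0 1 = sphi := by
  ext x
  simp [gaussianPDFReal, sphi, div_eq_inv_mul, mul_comm]

lemma sphi_pos (x : ℝ) : 0 < sphi x := by
  rw [← gaussianPDFReal_eq_sphi]; exact gaussianPDFReal_pos _ _ _ one_ne_zero

lemma continuous_sphi : Continuous sphi := by
  unfold sphi
  fun_prop

lemma integrable_sphi : Integrable sphi := by
  rw [← gaussianPDFReal_eq_sphi]; exact integrable_gaussianPDFReal 0 1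

lemma sPhi_eq (x : ℝ) : sPhi x = ∫ t in Iic x, sphi t := by
  rw [sPhi, gaussianReal_apply_eq_integral 0 one_ne_zero, gaussianPDFReal_eq_sphi,
    ENNReal.toReal_ofReal]
  exact setIntegral_nonneg measurableSet_Iic fun t _ => (sphi_pos t).le


lemma integral_sphi : ∫ t, sphi t = 1 := by
  rw [← gaussianPDFReal_eq_sphi]; exact integral_gaussianPDFReal_eq_one 0 one_ne_zero

lemma sphi_neg (x : ℝ) : sphi (-x) = sphi x := by simp [sphi]

lemma one_sub_sPhi (x : ℝ) : 1 - sPhi x = ∫ t in Ioi x, sphi t := by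
  rw [sPhi_eq, sub_eq_iff_eq_add, ← integral_sphi, add_comm]
  exact (intervalIntegral.integral_Iic_add_Ioi integrable_sphi.integrableOn integrable_sphi.integrableOn).symm

lemma sPhi_neg (x : ℝ) : sPhi (-x) = 1 - sPhi x := by
  rw [sPhi_eq, one_sub_sPhi]
  have : ∫ t in Iic (-x), sphi t = ∫ t in Iic (-x), sphi (-t) := by
    refine setIntegral_congr_fun measurableSet_Iic fun t _ => (sphi_neg t).symm
  rw [this, integral_comp_neg_Iic, neg_neg]

lemma sPhi_sub (a b : ℝ) : sPhi b - sPhi a = ∫ t in a..b, sphi t := by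
  rw [sPhi_eq, sPhi_eq]
  exact intervalIntegral.integral_Iic_sub_Iic integrable_sphi.integrableOn
    integrable_sphi.integrableOn

lemma hasDerivAt_sPhi (x : ℝ) : HasDerivAt sPhi (sphi x) x := by
  have h : HasDerivAt (fun y => sPhi 0 + ∫ t in (0:ℝ)..y, sphi t) (sphi x) x := by
    refine (intervalIntegral.integral_hasDerivAt_right
      (continuous_sphi.intervalIntegrable 0 x)
      (continuous_sphi.stronglyMeasurableAtFilter _ _)
      continuous_sphi.continuousAt).const_add _
  convert h using 1
  ext y
  rw [← sPhi_sub 0 y]; ring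

lemma continuous_sPhi : Continuous sPhi := by
  have := fun x => (hasDerivAt_sPhi x).continuousAt
  exact continuous_iff_continuousAt.2 this

lemma sPhi_pos (x : ℝ) : 0 < sPhi x := by
  rw [sPhi_eq]
  have : (0:ℝ) < ∫ t in Ioc (x-1) x, sphi t := by
    refine setIntegral_pos_iff_support_of_nonneg_ae ?_ ?_ |>.2 ?_
    · exact ae_of_all _ fun t => (sphi_pos t).le
    · exact integrable_sphi.integrableOn
    · have : (Function.support sphi) = univ := eq_univ_of_forall fun t => (sphi_pos t).ne'
      rw [this, univ_inter, Real.volume_Ioc]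
      simp
  refine lt_of_lt_of_le this ?_
  refine setIntegral_mono_set integrable_sphi.integrableOn
    (ae_of_all _ fun t => (sphi_pos t).le) (ae_of_all _ ?_)
  intro t ht; exact ht.2

lemma sPhi_lt_one (x : ℝ) : sPhi x < 1 := by
  have := sPhi_pos (-x)
  rw [sPhi_neg] at this; linarith

lemma sPhi_mono : Monotone sPhi := by
  intro a b hab
  have : 0 ≤ ∫ t in a..b, sphi t := by
    rw [intervalIntegral.integral_of_le hab]
    exact setIntegral_nonneg measurableSet_Ioc fun t _ => (sphi_pos t).le
  have h := sPhi_sub a b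
  linarith


lemma hasDerivAt_sphi (x : ℝ) : HasDerivAt sphi (-x * sphi x) x := by
  have h1 : HasDerivAt (fun t : ℝ => -t^2/2) (-x) x := by
    have := ((hasDerivAt_pow 2 x).neg.div_const 2)
    exact this.congr_deriv (by simp; ring)
  have h2 := (h1.exp).div_const (Real.sqrt (2*π))
  exact h2.congr_deriv (by unfold sphi; ring)

lemma tendsto_sphi_atTop : Tendsto sphi atTop (nhds 0) := by
  unfold sphi
  rw [show (0:ℝ) = 0 / Real.sqrt (2*π) by simp]
  refine Tendsto.div_const ?_ _
  refine Real.tendsto_exp_atBot.comp ?_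
  have h : Tendsto (fun x : ℝ => x^2/2) atTop atTop :=
    (tendsto_pow_atTop two_ne_zero).atTop_div_const two_pos
  have h2 := tendsto_neg_atTop_atBot.comp h
  convert h2 using 2 with x
  simp [Function.comp, neg_div]

lemma integrableOn_t_sphi (y : ℝ) (hy : 0 ≤ y) :
    IntegrableOn (fun t => t * sphi t) (Ioi y) := by
  refine integrableOn_Ioi_deriv_of_nonneg (g := fun t => -sphi t) (l := 0) ?_ ?_ ?_ ?_
  · exact (continuous_sphi.neg).continuousWithinAt
  · intro t _; have := (hasDerivAt_sphi t).neg; rwa [neg_mul, neg_neg] at this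
  · intro t ht
    exact mul_nonneg (le_trans hy (le_of_lt ht)) (sphi_pos t).le
  · simpa using tendsto_sphi_atTop.neg

lemma integral_t_sphi (y : ℝ) (hy : 0 ≤ y) : ∫ t in Ioi y, t * sphi t = sphi y := by
  have := integral_Ioi_of_hasDerivAt_of_nonneg (g := fun t => -sphi t)
    (g' := fun t => t * sphi t)
    (continuous_sphi.neg).continuousWithinAt
    (fun t _ => by have := (hasDerivAt_sphi t).neg; rwa [neg_mul, neg_neg] at this)
    (fun t ht => mul_nonneg (le_trans hy (le_of_lt ht)) (sphi_pos t).le)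
    (by simpa using tendsto_sphi_atTop.neg)
  simpa using this

lemma mills (y : ℝ) (hy : 0 < y) : y * (1 - sPhi y) < sphi y := by
  have key : (0:ℝ) < ∫ t in Ioi y, (t - y) * sphi t := by
    refine (setIntegral_pos_iff_support_of_nonneg_ae ?_ ?_).2 ?_
    · refine (ae_restrict_iff' measurableSet_Ioi).2 (ae_of_all _ fun t ht => ?_)
      exact mul_nonneg (sub_pos.2 ht).le (sphi_pos t).le
    · refine Integrable.congr ((integrableOn_t_sphi y hy.le).sub
        ((integrable_sphi.integrableOn).const_mul y)) (ae_of_all _ fun t => by simp [Pi.sub_apply]; ring)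
    · have hsub : Ioi y ⊆ Function.support (fun t => (t - y) * sphi t) ∩ Ioi y := by
        intro t ht
        refine ⟨?_, ht⟩
        have h1 := sphi_pos t
        have h2 : (0:ℝ) < t - y := sub_pos.2 ht
        exact (mul_pos h2 h1).ne'
      refine lt_of_lt_of_le ?_ (measure_mono hsub)
      simp [Real.volume_Ioi]
  have h1 : ∫ t in Ioi y, (t - y) * sphi t
      = (∫ t in Ioi y, t * sphi t) - y * ∫ t in Ioi y, sphi t := by
    rw [← MeasureTheory.integral_const_mul, ← integral_sub (integrableOn_t_sphi y hy.le)
      (((integrable_sphi.integrableOn (s := Ioi y))).const_mul y)]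
    refine setIntegral_congr_fun measurableSet_Ioi fun t _ => by ring
  rw [h1, integral_t_sphi y hy.le, ← one_sub_sPhi] at key
  linarith

lemma mills' (y : ℝ) : y * (1 - sPhi y) ≤ sphi y := by
  rcases lt_or_ge 0 y with hy | hy
  · exact (mills y hy).le
  · have h1 : 1 - sPhi y > 0 := by linarith [sPhi_lt_one y]
    nlinarith [sphi_pos y]

lemma M2 (y : ℝ) : 0 < y * sPhi y + sphi y := by
  rcases le_or_gt 0 y with hy | hy
  · have := sPhi_pos y
    have := sphi_pos y
    positivity
  · have := mills (-y) (by linarith)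
    rw [sPhi_neg, sphi_neg] at this
    nlinarith

lemma M2' (y : ℝ) : 0 < -y * (1 - sPhi y) + sphi y := by
  have := M2 (-y)
  rw [sPhi_neg, sphi_neg] at this
  linarith


noncomputable def II (y : ℝ) : ℝ := ∫ t in (0:ℝ)..y, Real.exp (-t^2/2)

lemma cont_e : Continuous (fun t : ℝ => Real.exp (-t^2/2)) := by fun_prop

lemma hasDerivAt_II (y : ℝ) : HasDerivAt II (Real.exp (-y^2/2)) y :=
  intervalIntegral.integral_hasDerivAt_right (cont_e.intervalIntegrable 0 y)
    (cont_e.stronglyMeasurableAtFilter _ _) cont_e.continuousAt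

lemma continuous_II : Continuous II :=
  continuous_iff_continuousAt.2 fun y => (hasDerivAt_II y).continuousAt

lemma integrableOn_e : IntegrableOn (fun t : ℝ => Real.exp (-t^2/2)) (Ioi 0) := by
  have h : ∀ t : ℝ, Real.exp (-t^2/2) = Real.exp (-(1/2) * t^2) := fun t => by ring_nf
  simp_rw [h]
  exact (integrable_exp_neg_mul_sq (by norm_num)).integrableOn

lemma II_tendsto : Tendsto II atTop (nhds (Real.sqrt (2*π)/2)) := by
  have h := intervalIntegral_tendsto_integral_Ioi 0 integrableOn_e tendsto_id
  have h2 : ∫ t in Ioi (0:ℝ), Real.exp (-t^2/2) = Real.sqrt (2*π)/2 := by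
    have h3 : ∀ t : ℝ, Real.exp (-t^2/2) = Real.exp (-(1/2) * t^2) := fun t => by ring_nf
    simp_rw [h3, integral_gaussian_Ioi]
    rw [show π / (1/2) = 2*π by ring]
  rw [← h2]; exact h

lemma II_lb (y : ℝ) (hy : 0 ≤ y) : y * Real.exp (-y^2/2) ≤ II y := by
  have : y * Real.exp (-y^2/2) = ∫ _t in (0:ℝ)..y, Real.exp (-y^2/2) := by
    rw [intervalIntegral.integral_const, smul_eq_mul, sub_zero]
  rw [this, II]
  refine intervalIntegral.integral_mono_on hy intervalIntegrable_const (cont_e.intervalIntegrable 0 y) ?_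
  intro t ht
  have h1 : t^2 ≤ y^2 := by nlinarith [ht.1, ht.2]
  apply Real.exp_le_exp.2; linarith

lemma II_div_anti : AntitoneOn (fun t => II t / t) (Ioi (0:ℝ)) := by
  refine antitoneOn_of_deriv_nonpos (convex_Ioi 0) ?_ ?_ ?_
  · exact (continuous_II.continuousOn).div continuousOn_id fun t ht => ne_of_gt ht
  · rw [interior_Ioi]
    intro t ht
    exact ((hasDerivAt_II t).div (hasDerivAt_id' t) (ne_of_gt ht)).differentiableAt.differentiableWithinAt
  · rw [interior_Ioi]
    intro t ht
    rw [HasDerivAt.deriv (f := fun t => II t / t) ((hasDerivAt_II t).div (hasDerivAt_id' t) (ne_of_gt ht))]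
    have h1 := II_lb t (le_of_lt ht)
    apply div_nonpos_of_nonpos_of_nonneg
    · nlinarith
    · positivity

noncomputable def JJ (y : ℝ) : ℝ := (II y)^2 - (π/2) * (1 - Real.exp (-y^2/2))

lemma hasDerivAt_JJ (y : ℝ) :
    HasDerivAt JJ (Real.exp (-y^2/2) * (2 * II y - (π/2) * y)) y := by
  have h1 : HasDerivAt (fun t : ℝ => -t^2/2) (-y) y := by
    have := ((hasDerivAt_pow 2 y).neg.div_const 2)
    exact this.congr_deriv (by simp; ring)
  have h2 : HasDerivAt (fun t => Real.exp (-t^2/2)) (Real.exp (-y^2/2) * (-y)) y := h1.exp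
  have h3 : HasDerivAt (fun t => (II t)^2) (2 * II y * Real.exp (-y^2/2)) y := by
    have := (hasDerivAt_II y).pow 2
    exact this.congr_deriv (by simp)
  have h4 := h3.sub (((h2.const_sub 1)).const_mul (π/2))
  exact h4.congr_deriv (by ring)

lemma continuous_JJ : Continuous JJ :=
  continuous_iff_continuousAt.2 fun y => (hasDerivAt_JJ y).continuousAt

lemma JJ_tendsto : Tendsto JJ atTop (nhds 0) := by
  have h1 : Tendsto (fun y : ℝ => Real.exp (-y^2/2)) atTop (nhds 0) := by
    refine Real.tendsto_exp_atBot.comp ?_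
    have h : Tendsto (fun x : ℝ => x^2/2) atTop atTop :=
      (tendsto_pow_atTop two_ne_zero).atTop_div_const two_pos
    have h2 := tendsto_neg_atTop_atBot.comp h
    convert h2 using 2 with x
    simp [Function.comp, neg_div]
  have h2 : Tendsto JJ atTop
      (nhds ((Real.sqrt (2*π)/2)^2 - (π/2) * (1 - 0))) := by
    exact ((II_tendsto.pow 2).sub (((h1.const_sub 1)).const_mul (π/2)))
  convert h2 using 2
  rw [div_pow, sq_sqrt (by positivity)]
  ring

lemma JJ_nonneg (y : ℝ) (hy : 0 ≤ y) : 0 ≤ JJ y := by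
  rcases eq_or_lt_of_le hy with rfl | hy
  · simp [JJ, II]
  rcases le_or_gt 0 (2 * II y - (π/2) * y) with hK | hK
  · have hmono : MonotoneOn JJ (Icc 0 y) := by
      refine monotoneOn_of_deriv_nonneg (convex_Icc 0 y) continuous_JJ.continuousOn
        (fun t _ => (hasDerivAt_JJ t).differentiableAt.differentiableWithinAt) ?_
      intro t ht
      rw [interior_Icc] at ht
      rw [(hasDerivAt_JJ t).deriv]
      have ht0 : 0 < t := ht.1
      have hty : t < y := ht.2
      have := II_div_anti (mem_Ioi.2 ht0) (mem_Ioi.2 (lt_trans ht0 hty)) hty.le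
      have he : 0 ≤ Real.exp (-t^2/2) := (Real.exp_pos _).le
      have hKt : 0 ≤ 2 * II t - (π/2) * t := by
        have h1 : II y / y ≤ II t / t := this
        have h2 : (0:ℝ) < t := ht0
        have h3 : (0:ℝ) < y := lt_trans ht0 hty
        have h4 : II y * t ≤ II t * y := (div_le_div_iff₀ h3 h2).1 h1
        have h5 : 0 < t * y := mul_pos h2 h3
        nlinarith
      positivity
    have := hmono (left_mem_Icc.2 hy.le) (right_mem_Icc.2 hy.le) hy.le
    simpa [JJ, II] using this
  · have hanti : AntitoneOn JJ (Ici y) := by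
      refine antitoneOn_of_deriv_nonpos (convex_Ici y) continuous_JJ.continuousOn
        (fun t _ => (hasDerivAt_JJ t).differentiableAt.differentiableWithinAt) ?_
      intro t ht
      rw [interior_Ici] at ht
      rw [(hasDerivAt_JJ t).deriv]
      have hty : y < t := ht
      have := II_div_anti (mem_Ioi.2 hy) (mem_Ioi.2 (lt_trans hy hty)) hty.le
      have hKt : 2 * II t - (π/2) * t ≤ 0 := by
        have h1 : II t / t ≤ II y / y := this
        have h2 : (0:ℝ) < y := hy
        have h3 : (0:ℝ) < t := lt_trans hy hty
        have h4 : II t * y ≤ II y * t := (div_le_div_iff₀ h3 h2).1 h1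
        have h5 : 0 < t * y := mul_pos h3 h2
        nlinarith
      have he : 0 ≤ Real.exp (-t^2/2) := (Real.exp_pos _).le
      exact mul_nonpos_of_nonneg_of_nonpos he hKt
    refine le_of_tendsto JJ_tendsto ?_
    refine eventually_atTop.2 ⟨y, fun t hty => hanti (mem_Ici.2 le_rfl) (mem_Ici.2 hty) hty⟩


lemma sPhi_zero : sPhi 0 = 1/2 := by
  have := sPhi_neg 0
  rw [neg_zero] at this; linarith

lemma sPhi_eq_II (y : ℝ) : sPhi y = 1/2 + II y / Real.sqrt (2*π) := by
  have h := sPhi_sub 0 y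
  rw [sPhi_zero] at h
  have h2 : ∫ t in (0:ℝ)..y, sphi t = II y / Real.sqrt (2*π) := by
    rw [II, ← intervalIntegral.integral_div]
    rfl
  linarith [h, h2]

lemma M3 (y : ℝ) : sPhi y * (1 - sPhi y) ≤ Real.exp (-y^2/2) / 4 := by
  have key : ∀ w : ℝ, 0 ≤ w → sPhi w * (1 - sPhi w) ≤ Real.exp (-w^2/2) / 4 := by
    intro w hw
    have hJ := JJ_nonneg w hw
    unfold JJ at hJ
    have hP := sPhi_eq_II w
    have hs : Real.sqrt (2*π) ^ 2 = 2*π := sq_sqrt (by positivity)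
    have hs0 : 0 < Real.sqrt (2*π) := by positivity
    have hpi : 0 < π := pi_pos
    have hIw : II w / Real.sqrt (2*π) * (II w / Real.sqrt (2*π)) = (II w)^2 / (2*π) := by
      rw [div_mul_div_comm, ← sq, ← sq, hs]
    rw [hP]
    have key2 : (1 - Real.exp (-w^2/2))/4 ≤ (II w)^2/(2*π) := by
      rw [div_le_div_iff₀ (by norm_num) (by positivity)]
      nlinarith
    have hr : (1/2 + II w / Real.sqrt (2*π)) * (1 - (1/2 + II w / Real.sqrt (2*π)))
        = 1/4 - II w / Real.sqrt (2*π) * (II w / Real.sqrt (2*π)) := by ring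
    rw [hr, hIw]
    linarith
  rcases le_or_gt 0 y with hy | hy
  · exact key y hy
  · have := key (-y) (by linarith)
    rw [sPhi_neg, neg_sq] at this
    nlinarith

lemma div_sphi_bound (y : ℝ) (A : ℝ) (hA : A ≤ Real.exp (-y^2/2)/4) :
    A / sphi y ≤ Real.sqrt (2*π)/4 := by
  rw [div_le_iff₀ (sphi_pos y)]
  have h : Real.sqrt (2*π)/4 * sphi y = Real.exp (-y^2/2)/4 := by
    rw [sphi]
    have hs0 : Real.sqrt (2*π) ≠ 0 := by positivity
    field_simp
  rw [h]; exact hA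

lemma F_le_left {z y : ℝ} (hyz : y ≤ z) :
    (1 - sPhi z) * sPhi y / sphi y ≤ Real.sqrt (2*π)/4 := by
  refine div_sphi_bound y _ (le_trans ?_ (M3 y))
  have h1 := sPhi_mono hyz
  have h2 := sPhi_pos y
  nlinarith

lemma F_le_right {z y : ℝ} (hzy : z ≤ y) :
    sPhi z * (1 - sPhi y) / sphi y ≤ Real.sqrt (2*π)/4 := by
  refine div_sphi_bound y _ (le_trans ?_ (M3 y))
  have h1 := sPhi_mono hzy
  have h2 := sPhi_lt_one y
  nlinarith

noncomputable def SF (z x : ℝ) : ℝ :=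
  if x ≤ z then (1 - sPhi z) * sPhi x / sphi x else sPhi z * (1 - sPhi x) / sphi x

noncomputable def Sg (z x : ℝ) : ℝ :=
  x * SF z x + (if x ≤ z then 1 else 0) - sPhi z

lemma SF_pos (z x : ℝ) : 0 < SF z x := by
  unfold SF
  split_ifs
  · exact div_pos (mul_pos (by linarith [sPhi_lt_one z]) (sPhi_pos x)) (sphi_pos x)
  · exact div_pos (mul_pos (sPhi_pos z) (by linarith [sPhi_lt_one x])) (sphi_pos x)

lemma SF_le (z x : ℝ) : SF z x ≤ Real.sqrt (2*π)/4 := by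
  unfold SF
  split_ifs with h
  · exact F_le_left h
  · exact F_le_right (le_of_lt (not_le.1 h))

lemma continuous_SF (z : ℝ) : Continuous (SF z) := by
  unfold SF
  refine Continuous.if_le ?_ ?_ continuous_id continuous_const ?_
  · exact ((continuous_const.mul continuous_sPhi).div continuous_sphi
      fun x => (sphi_pos x).ne')
  · exact ((continuous_const.mul (continuous_const.sub continuous_sPhi)).div continuous_sphi
      fun x => (sphi_pos x).ne')
  · intro x hx
    rw [hx]
    ring

lemma SF_deriv_lt {z x : ℝ} (hx : x < z) : HasDerivAt (SF z) (Sg z x) x := by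
  have hA : HasDerivAt (fun y => (1 - sPhi z) * sPhi y / sphi y)
      ((1 - sPhi z) + x * ((1 - sPhi z) * sPhi x / sphi x)) x := by
    have h := (((hasDerivAt_sPhi x).const_mul (1 - sPhi z)).div (hasDerivAt_sphi x)
      (sphi_pos x).ne')
    refine h.congr_deriv ?_
    have hs := (sphi_pos x).ne'
    field_simp
    ring
  have heq : SF z =ᶠ[nhds x] (fun y => (1 - sPhi z) * sPhi y / sphi y) := by
    filter_upwards [Iio_mem_nhds hx] with y hy
    simp [SF, le_of_lt (mem_Iio.1 hy)]
  rw [show Sg z x = (1 - sPhi z) + x * ((1 - sPhi z) * sPhi x / sphi x) by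
    simp [Sg, SF, le_of_lt hx]; ring]
  exact hA.congr_of_eventuallyEq heq

lemma SF_deriv_gt {z x : ℝ} (hx : z < x) : HasDerivAt (SF z) (Sg z x) x := by
  have hA : HasDerivAt (fun y => sPhi z * (1 - sPhi y) / sphi y)
      (-sPhi z + x * (sPhi z * (1 - sPhi x) / sphi x)) x := by
    have h := ((((hasDerivAt_sPhi x).const_sub 1).const_mul (sPhi z)).div (hasDerivAt_sphi x)
      (sphi_pos x).ne')
    refine h.congr_deriv ?_
    have hs := (sphi_pos x).ne'
    field_simp
    ring
  have heq : SF z =ᶠ[nhds x] (fun y => sPhi z * (1 - sPhi y) / sphi y) := by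
    filter_upwards [Ioi_mem_nhds hx] with y hy
    simp [SF, not_le.2 (mem_Ioi.1 hy)]
  rw [show Sg z x = -sPhi z + x * (sPhi z * (1 - sPhi x) / sphi x) by
    simp [Sg, SF, not_le.2 hx]; ring]
  exact hA.congr_of_eventuallyEq heq

lemma Sg_abs_le (z x : ℝ) : |Sg z x| ≤ 1 := by
  have hphi := sphi_pos x
  have hPx := sPhi_pos x
  have hPx1 := sPhi_lt_one x
  have hPz := sPhi_pos z
  have hPz1 := sPhi_lt_one z
  rw [abs_le]
  unfold Sg SF
  split_ifs with h
  · -- x ≤ z : Sg = (1-Φz)(xΦx+φx)/φx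
    have hmono := sPhi_mono h
    have hM2 := M2 x
    have hmills := mills' x
    have heq : x * ((1 - sPhi z) * sPhi x / sphi x) + 1 - sPhi z
        = (1 - sPhi z) * (x * sPhi x + sphi x) / sphi x := by
      field_simp; ring
    rw [heq]
    constructor
    · have : 0 < (1 - sPhi z) * (x * sPhi x + sphi x) / sphi x :=
        div_pos (mul_pos (by linarith) hM2) hphi
      linarith
    · rw [div_le_one hphi]
      nlinarith
  · -- x > z : Sg = Φz(x(1-Φx) - φx)/φx
    have hx : z < x := not_le.1 h
    have hmono := sPhi_mono hx.le
    have hM2' := M2' x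
    have hmills := mills' x
    have heq : x * (sPhi z * (1 - sPhi x) / sphi x) + 0 - sPhi z
        = sPhi z * (x * (1 - sPhi x) - sphi x) / sphi x := by
      field_simp; ring
    rw [heq]
    constructor
    · rw [le_div_iff₀ hphi]
      nlinarith [mul_nonneg (by linarith : (0:ℝ) ≤ 1 - sPhi x) (M2 x).le,
        mul_nonneg (by linarith : (0:ℝ) ≤ sPhi x - sPhi z)
          (by linarith : (0:ℝ) ≤ sphi x - x * (1 - sPhi x))]
    · have : sPhi z * (x * (1 - sPhi x) - sphi x) / sphi x ≤ 0 := by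
        apply div_nonpos_of_nonpos_of_nonneg _ hphi.le
        apply mul_nonpos_of_nonneg_of_nonpos hPz.le
        linarith
      linarith

lemma intInd (c a b : ℝ) :
    IntervalIntegrable (fun t : ℝ => if t ≤ c then (1:ℝ) else 0) volume a b := by
  have h : (fun t : ℝ => if t ≤ c then (1:ℝ) else 0) = Set.indicator (Iic c) (fun _ => 1) := by
    ext t; simp [Set.indicator, Set.mem_Iic]
  rw [h, intervalIntegrable_iff]
  refine Integrable.indicator ?_ measurableSet_Iic
  exact integrableOn_const measure_Ioc_lt_top.ne

lemma intSg (z a b : ℝ) : IntervalIntegrable (Sg z) volume a b := by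
  have h : Sg z = fun x => (x * SF z x - sPhi z) + (if x ≤ z then (1:ℝ) else 0) := by
    ext x; unfold Sg; ring
  rw [h]
  exact (((continuous_id.mul (continuous_SF z)).sub continuous_const).intervalIntegrable
    a b).add (intInd z a b)

lemma SF_ftc_le {z : ℝ} (a b : ℝ) (hab : a ≤ b) :
    SF z b - SF z a = ∫ t in a..b, Sg z t := by
  have main : ∀ p q : ℝ, p ≤ q → (q ≤ z ∨ z ≤ p) →
      SF z q - SF z p = ∫ t in p..q, Sg z t := by
    intro p q hpq hcase
    rw [intervalIntegral.integral_eq_sub_of_hasDeriv_right_of_le hpq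
      ((continuous_SF z).continuousOn) ?_ (intSg z p q)]
    intro t ht
    rcases hcase with hc | hc
    · exact (SF_deriv_lt (lt_of_lt_of_le ht.2 hc)).hasDerivWithinAt
    · exact (SF_deriv_gt (lt_of_le_of_lt hc ht.1)).hasDerivWithinAt
  rcases le_or_gt b z with hbz | hbz
  · exact main a b hab (Or.inl hbz)
  rcases le_or_gt z a with hza | hza
  · exact main a b hab (Or.inr hza)
  · have h1 := main a z hza.le (Or.inl le_rfl)
    have h2 := main z b hbz.le (Or.inr le_rfl)
    have h3 := intervalIntegral.integral_add_adjacent_intervals (intSg z a z) (intSg z z b)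
    linarith

lemma SF_ftc {z : ℝ} (a b : ℝ) : SF z b - SF z a = ∫ t in a..b, Sg z t := by
  rcases le_total a b with h | h
  · exact SF_ftc_le a b h
  · have := SF_ftc_le (z := z) b a h
    rw [intervalIntegral.integral_symm]
    linarith

lemma SF_lip {z : ℝ} (a b : ℝ) : |SF z b - SF z a| ≤ |b - a| := by
  rw [SF_ftc a b]
  have := intervalIntegral.norm_integral_le_of_norm_le_const
    (f := Sg z) (a := a) (b := b) (C := 1) (fun t _ => by simpa using Sg_abs_le z t)
  simpa using this


lemma abs_int_le (u K : ℝ) (f : ℝ → ℝ) (hf : Continuous f)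
    (hpt : ∀ t, |f t| ≤ K * |t|) : |∫ t in (0:ℝ)..u, f t| ≤ K * (u^2/2) := by
  have hcK : Continuous fun t : ℝ => K * |t| := continuous_const.mul continuous_abs
  rcases le_total 0 u with hu | hu
  · have h1 : |∫ t in (0:ℝ)..u, f t| ≤ |(∫ t in (0:ℝ)..u, |f t|)| := by
      have h := intervalIntegral.norm_integral_le_abs_integral_norm
        (f := f) (a := (0:ℝ)) (b := u) (μ := volume)
      simpa [Real.norm_eq_abs] using h
    have h2 : ∫ t in (0:ℝ)..u, |f t| ≤ ∫ t in (0:ℝ)..u, K * |t| :=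
      intervalIntegral.integral_mono_on hu (hf.abs.intervalIntegrable 0 u)
        (hcK.intervalIntegrable 0 u) fun t _ => hpt t
    have h3 : ∫ t in (0:ℝ)..u, K * |t| = K * (u^2/2) := by
      have heq : EqOn (fun t : ℝ => K * |t|) (fun t => K * t) (uIcc 0 u) := by
        intro t ht
        rw [uIcc_of_le hu] at ht
        simp only
        rw [abs_of_nonneg ht.1]
      rw [intervalIntegral.integral_congr heq, intervalIntegral.integral_const_mul,
        integral_id]
      ring
    have h4 : 0 ≤ ∫ t in (0:ℝ)..u, |f t| :=
      intervalIntegral.integral_nonneg hu fun t _ => abs_nonneg _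
    rw [abs_of_nonneg h4] at h1
    linarith
  · have h0 : |∫ t in (0:ℝ)..u, f t| = |∫ t in u..(0:ℝ), f t| := by
      rw [intervalIntegral.integral_symm, abs_neg]
    have h1 : |∫ t in u..(0:ℝ), f t| ≤ |(∫ t in u..(0:ℝ), |f t|)| := by
      have h := intervalIntegral.norm_integral_le_abs_integral_norm
        (f := f) (a := u) (b := (0:ℝ)) (μ := volume)
      simpa [Real.norm_eq_abs] using h
    have h2 : ∫ t in u..(0:ℝ), |f t| ≤ ∫ t in u..(0:ℝ), K * |t| :=
      intervalIntegral.integral_mono_on hu (hf.abs.intervalIntegrable u 0)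
        (hcK.intervalIntegrable u 0) fun t _ => hpt t
    have h3 : ∫ t in u..(0:ℝ), K * |t| = K * (u^2/2) := by
      have heq : EqOn (fun t : ℝ => K * |t|) (fun t => -K * t) (uIcc u 0) := by
        intro t ht
        rw [uIcc_of_le hu] at ht
        simp only
        rw [abs_of_nonpos ht.2]
        ring
      rw [intervalIntegral.integral_congr heq, intervalIntegral.integral_const_mul,
        integral_id]
      ring
    have h4 : 0 ≤ ∫ t in u..(0:ℝ), |f t| :=
      intervalIntegral.integral_nonneg hu fun t _ => abs_nonneg _
    rw [abs_of_nonneg h4] at h1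
    rw [h0]
    linarith

/-- Quantitative Taylor bound for the Stein solution of indicator test functions:
for all `x, u, z ∈ ℝ`,
`|f_z(x+u) − f_z(x) − f_z'(x) u| ≤ (u²/2)(|x| + √(2π)/4) + |u| 1_{z − max(u,0) < x ≤ z − min(u,0)}`,
where `f_z'(z)` is defined as `z f_z(z) + 1 − Φ(z)`. -/
theorem stein_solution_taylor_indicator
    (z : ℝ) (fz fz' : ℝ → ℝ)
    (hfz : ∀ x, fz x = if x ≤ z
      then (1 - ((gaussianReal 0 1) (Set.Iic z)).toReal)
          * ((gaussianReal 0 1) (Set.Iic x)).toReal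
          / (Real.exp (-x ^ 2 / 2) / Real.sqrt (2 * π))
      else ((gaussianReal 0 1) (Set.Iic z)).toReal
          * (1 - ((gaussianReal 0 1) (Set.Iic x)).toReal)
          / (Real.exp (-x ^ 2 / 2) / Real.sqrt (2 * π)))
    (hfz' : ∀ x, fz' x = if x = z
      then z * fz z + 1 - ((gaussianReal 0 1) (Set.Iic z)).toReal
      else deriv fz x) :
    ∀ x u : ℝ, |fz (x + u) - fz x - fz' x * u|
      ≤ u ^ 2 / 2 * (|x| + Real.sqrt (2 * π) / 4)
        + |u| * (if z - max u 0 < x ∧ x ≤ z - min u 0 then 1 else 0) := by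
  have hF : fz = SF z := by
    funext y
    rw [hfz y]
    simp only [SF, sPhi, sphi]
  have hg : ∀ y, fz' y = Sg z y := by
    intro y
    rw [hfz' y]
    split_ifs with h
    · rw [h, hF]
      show z * SF z z + 1 - sPhi z = Sg z z
      simp [Sg]
    · rw [hF]
      rcases lt_or_gt_of_ne h with hlt | hgt
      · exact (SF_deriv_lt hlt).deriv
      · exact (SF_deriv_gt hgt).deriv
  intro x u
  set c : ℝ := Real.sqrt (2*π)/4 with hc
  -- decomposition
  have hSFc : Continuous fun t => SF z (x + t) :=
    (continuous_SF z).comp (continuous_const.add continuous_id)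
  set A : ℝ → ℝ := fun t => x * (SF z (x + t) - SF z x) + t * SF z (x + t) with hA
  set B : ℝ → ℝ := fun t => (if x + t ≤ z then (1:ℝ) else 0) - (if x ≤ z then 1 else 0)
    with hB
  have hAc : Continuous A :=
    ((continuous_const.mul (hSFc.sub continuous_const))).add (continuous_id.mul hSFc)
  have hBi : IntervalIntegrable B volume 0 u := by
    have h : (fun t => (if x + t ≤ z then (1:ℝ) else 0))
        = fun t => if t ≤ z - x then (1:ℝ) else 0 := by
      ext t
      congr 1
      · simp [le_sub_iff_add_le']
    refine IntervalIntegrable.sub ?_ intervalIntegrable_const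
    rw [h]
    exact intInd (z - x) 0 u
  have hSgi : IntervalIntegrable (fun t => Sg z (x + t)) volume 0 u := by
    have := (intSg z x (x + u)).comp_add_left x
    simpa using this
  have h1 : fz (x + u) - fz x = ∫ t in (0:ℝ)..u, Sg z (x + t) := by
    rw [hF, SF_ftc x (x + u)]
    rw [intervalIntegral.integral_comp_add_left (Sg z) x]
    norm_num
  have h2 : fz' x * u = ∫ t in (0:ℝ)..u, Sg z x := by
    rw [intervalIntegral.integral_const, hg, smul_eq_mul, sub_zero, mul_comm]
  have hsum : ∀ t, Sg z (x + t) - Sg z x = A t + B t := by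
    intro t
    simp only [hA, hB, Sg]
    ring
  have hE : fz (x + u) - fz x - fz' x * u
      = (∫ t in (0:ℝ)..u, A t) + ∫ t in (0:ℝ)..u, B t := by
    rw [h1, h2, ← intervalIntegral.integral_sub hSgi intervalIntegrable_const,
      ← intervalIntegral.integral_add (hAc.intervalIntegrable 0 u) hBi]
    exact intervalIntegral.integral_congr fun t _ => hsum t
  -- bound A
  have hAle : |∫ t in (0:ℝ)..u, A t| ≤ (|x| + c) * (u^2/2) := by
    refine abs_int_le u (|x| + c) A hAc fun t => ?_
    have hl : |SF z (x + t) - SF z x| ≤ |t| := by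
      have := SF_lip (z := z) x (x + t)
      simpa using this
    have hs : |SF z (x + t)| ≤ c := by
      rw [abs_of_pos (SF_pos z _)]
      exact SF_le z _
    calc |A t| ≤ |x * (SF z (x + t) - SF z x)| + |t * SF z (x + t)| := abs_add_le _ _
      _ = |x| * |SF z (x + t) - SF z x| + |t| * |SF z (x + t)| := by
          rw [abs_mul, abs_mul]
      _ ≤ |x| * |t| + |t| * c := by
          refine add_le_add (mul_le_mul_of_nonneg_left hl (abs_nonneg x))
            (mul_le_mul_of_nonneg_left hs (abs_nonneg t))
      _ = (|x| + c) * |t| := by ring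
  -- bound B
  have hBle : |∫ t in (0:ℝ)..u, B t|
      ≤ |u| * (if z - max u 0 < x ∧ x ≤ z - min u 0 then 1 else 0) := by
    split_ifs with hcond
    · rw [mul_one]
      have hb : ∀ t ∈ Set.uIoc (0:ℝ) u, ‖B t‖ ≤ 1 := by
        intro t _
        simp only [hB, Real.norm_eq_abs]
        have h1 : (0:ℝ) ≤ (if x + t ≤ z then (1:ℝ) else 0) ∧
            (if x + t ≤ z then (1:ℝ) else 0) ≤ 1 := by split_ifs <;> norm_num
        have h2 : (0:ℝ) ≤ (if x ≤ z then (1:ℝ) else 0) ∧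
            (if x ≤ z then (1:ℝ) else 0) ≤ 1 := by split_ifs <;> norm_num
        rw [abs_le]
        exact ⟨by linarith [h1.2, h2.2], by linarith [h1.1, h2.1]⟩
      have := intervalIntegral.norm_integral_le_of_norm_le_const hb
      simpa [Real.norm_eq_abs] using this
    · rw [mul_zero]
      have hz : ∀ t ∈ uIcc (0:ℝ) u, B t = 0 := by
        intro t ht
        push_neg at hcond
        have htmem := Set.mem_uIcc.1 ht
        rcases le_or_gt x (z - max u 0) with hx1 | hx1
        · have hxz : x ≤ z := le_trans hx1 (by
            have : (0:ℝ) ≤ max u 0 := le_max_right u 0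
            linarith)
          have ht' : t ≤ max u 0 := by
            rcases htmem with ⟨h1', h2'⟩ | ⟨h1', h2'⟩
            · exact le_trans h2' (le_max_left u 0)
            · exact le_trans h2' (le_max_right u 0)
          have hxtz : x + t ≤ z := by linarith
          simp only [hB]
          rw [if_pos hxtz, if_pos hxz, sub_self]
        · have hx2 : z - min u 0 < x := hcond hx1
          have hmin : min u 0 ≤ 0 := min_le_right u 0
          have hxz : ¬ (x ≤ z) := by push_neg; linarith
          have ht' : min u 0 ≤ t := by
            rcases htmem with ⟨h1', h2'⟩ | ⟨h1', h2'⟩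
            · exact le_trans (min_le_right u 0) h1'
            · exact le_trans (min_le_left u 0) h1'
          have hxtz : ¬ (x + t ≤ z) := by push_neg; linarith
          simp only [hB]
          rw [if_neg hxtz, if_neg hxz, sub_self]
      have : ∫ t in (0:ℝ)..u, B t = ∫ t in (0:ℝ)..u, (0:ℝ) :=
        intervalIntegral.integral_congr fun t ht => hz t ht
      rw [this]
      simp
  have hfinal := abs_add_le (∫ t in (0:ℝ)..u, A t) (∫ t in (0:ℝ)..u, B t)
  rw [hE]
  calc |(∫ t in (0:ℝ)..u, A t) + ∫ t in (0:ℝ)..u, B t|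
      ≤ |∫ t in (0:ℝ)..u, A t| + |∫ t in (0:ℝ)..u, B t| := hfinal
    _ ≤ (|x| + c) * (u^2/2)
        + |u| * (if z - max u 0 < x ∧ x ≤ z - min u 0 then 1 else 0) :=
        add_le_add hAle hBle
    _ = u ^ 2 / 2 * (|x| + Real.sqrt (2 * π) / 4)
        + |u| * (if z - max u 0 < x ∧ x ≤ z - min u 0 then 1 else 0) := by
        rw [hc]; ring
end
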